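/- arXiv:2309.14599 — 4 statements merged into one kernel-verified Lean document; each statement's English description precedes it below -/
import Mathlib

section
/- Let R > 0 and z₀ < −R be fixed. There exist a number λ₀ > 1 and a constant C > 0, both depending only on R and z₀, such that for every λ ≥ λ₀ and every w ∈ C²([−R, R]; ℝ), ∫_{−R}^{R} e^{2λ(z−z₀)^{−2}} |w''(z)|² dz ≥ −C e^{2λ(R−z₀)^{−2}} (λ³ |w(R)|² + λ |w'(R)|²) − C e^{2λ(−R−z₀)^{−2}} (λ³ |w(−R)|² + λ |w'(−R)|²) + C λ³ ∫_{−R}^{R} e^{2λ(z−z₀)^{−2}} |w(z)|² dz − C λ ∫_{−R}^{R} e^{2λ(z−z₀)^{−2}} |w'(z)|² dz. -/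
open Set MeasureTheory intervalIntegral

lemma carleman_aux (R z₀ : ℝ) (hR : 0 < R) (hz₀ : z₀ < -R) (lam : ℝ) (hlam : 0 < lam)
    (u u' : ℝ → ℝ)
    (hu : ∀ z ∈ Set.Icc (-R) R, HasDerivWithinAt u (u' z) (Set.Icc (-R) R) z)
    (hu' : ContinuousOn u' (Set.Icc (-R) R)) :
    (lam * (2 / (R - z₀) ^ 3)) ^ 2 *
        (∫ z in (-R)..R, Real.exp (2 * lam / (z - z₀) ^ 2) * (u z) ^ 2)
      ≤ (lam * (2 / (R - z₀) ^ 3)) * Real.exp (2 * lam / (-R - z₀) ^ 2) * (u (-R)) ^ 2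
        + ∫ z in (-R)..R, Real.exp (2 * lam / (z - z₀) ^ 2) * (u' z) ^ 2 := by
  have hRR : (-R) ≤ R := by linarith
  have hd : (0:ℝ) < R - z₀ := by linarith
  have hsub : ∀ z ∈ Set.Icc (-R) R, 0 < z - z₀ := by
    intro z hz; have := hz.1; linarith
  set k := lam * (2 / (R - z₀) ^ 3) with hk
  have hkpos : 0 < k := by positivity
  have hucont : ContinuousOn u (Set.Icc (-R) R) :=
    fun z hz => (hu z hz).continuousWithinAt
  have hφc : ContinuousOn (fun z => Real.exp (2 * lam / (z - z₀) ^ 2)) (Set.Icc (-R) R) := by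
    apply Real.continuous_exp.comp_continuousOn
    apply ContinuousOn.div continuousOn_const (by fun_prop)
    intro z hz
    have := hsub z hz
    positivity
  have hφd : ∀ z ∈ Set.Icc (-R) R, HasDerivAt (fun z => Real.exp (2 * lam / (z - z₀) ^ 2))
      (Real.exp (2 * lam / (z - z₀) ^ 2) * (-(4 * lam) / (z - z₀) ^ 3)) z := by
    intro z hz
    have h0 : z - z₀ ≠ 0 := (hsub z hz).ne'
    have h1 : HasDerivAt (fun z => (z - z₀) ^ 2) (2 * (z - z₀)) z := by
      simpa using ((hasDerivAt_id z).sub_const z₀).fun_pow 2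
    have h2 : HasDerivAt (fun z => 2 * lam / (z - z₀) ^ 2) (-(4 * lam) / (z - z₀) ^ 3) z := by
      have := (hasDerivAt_const z (2 * lam)).fun_div h1 (pow_ne_zero 2 h0)
      refine this.congr_deriv ?_
      field_simp
      ring
    exact h2.exp
  -- derivative of g = φ u²
  have hg : ∀ z ∈ Set.Icc (-R) R,
      HasDerivWithinAt (fun z => Real.exp (2 * lam / (z - z₀) ^ 2) * (u z) ^ 2)
        (Real.exp (2 * lam / (z - z₀) ^ 2) *
          ((-(4 * lam) / (z - z₀) ^ 3) * (u z) ^ 2 + 2 * u z * u' z)) (Set.Icc (-R) R) z := by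
    intro z hz
    have h3 : HasDerivWithinAt (fun z => (u z) ^ 2) (2 * u z * u' z) (Set.Icc (-R) R) z := by
      have := (hu z hz).fun_pow 2
      refine this.congr_deriv ?_
      ring
    have := ((hφd z hz).hasDerivWithinAt).fun_mul h3
    refine this.congr_deriv ?_
    ring
  have hg'c : ContinuousOn (fun z => Real.exp (2 * lam / (z - z₀) ^ 2) *
      ((-(4 * lam) / (z - z₀) ^ 3) * (u z) ^ 2 + 2 * u z * u' z)) (Set.Icc (-R) R) := by
    apply hφc.mul
    apply ContinuousOn.add
    · apply ContinuousOn.mul _ (hucont.pow 2)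
      apply ContinuousOn.div continuousOn_const (by fun_prop)
      intro z hz
      have := hsub z hz
      positivity
    · exact (continuousOn_const.mul hucont).mul hu'
  have hFTC : (∫ z in (-R)..R, Real.exp (2 * lam / (z - z₀) ^ 2) *
        ((-(4 * lam) / (z - z₀) ^ 3) * (u z) ^ 2 + 2 * u z * u' z))
      = Real.exp (2 * lam / (R - z₀) ^ 2) * (u R) ^ 2
        - Real.exp (2 * lam / (-R - z₀) ^ 2) * (u (-R)) ^ 2 := by
    apply intervalIntegral.integral_eq_sub_of_hasDeriv_right_of_le hRR
      (hφc.mul (hucont.pow 2))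
      (fun x hx => (((hg x (Set.Ioo_subset_Icc_self hx)).hasDerivAt
        (Icc_mem_nhds hx.1 hx.2)).hasDerivWithinAt))
      (by apply ContinuousOn.intervalIntegrable; rw [Set.uIcc_of_le hRR]; exact hg'c)
  -- pointwise inequality
  have hpt : ∀ z ∈ Set.Icc (-R) R,
      Real.exp (2 * lam / (z - z₀) ^ 2) * (k ^ 2 * (u z) ^ 2 - (u' z) ^ 2)
        ≤ k * (-(Real.exp (2 * lam / (z - z₀) ^ 2) *
            ((-(4 * lam) / (z - z₀) ^ 3) * (u z) ^ 2 + 2 * u z * u' z))) := by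
    intro z hz
    have h0 : 0 < z - z₀ := hsub z hz
    have hle : (z - z₀) ^ 3 ≤ (R - z₀) ^ 3 := by
      have h2 : z ≤ R := hz.2
      gcongr
    have hA : 2 * k ≤ 4 * lam / (z - z₀) ^ 3 := by
      have h1 : 4 * lam / (R - z₀) ^ 3 ≤ 4 * lam / (z - z₀) ^ 3 := by
        gcongr
      have h2 : 2 * k = 4 * lam / (R - z₀) ^ 3 := by
        rw [hk]; field_simp; ring
      linarith
    have hφpos : (0:ℝ) < Real.exp (2 * lam / (z - z₀) ^ 2) := Real.exp_pos _
    have key : k ^ 2 * (u z) ^ 2 - (u' z) ^ 2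
        ≤ k * ((4 * lam / (z - z₀) ^ 3) * (u z) ^ 2 - 2 * u z * u' z) := by
      nlinarith [sq_nonneg (k * u z - u' z),
        mul_nonneg (mul_nonneg hkpos.le (sub_nonneg.mpr hA)) (sq_nonneg (u z))]
    have := mul_le_mul_of_nonneg_left key hφpos.le
    calc Real.exp (2 * lam / (z - z₀) ^ 2) * (k ^ 2 * (u z) ^ 2 - (u' z) ^ 2)
        ≤ Real.exp (2 * lam / (z - z₀) ^ 2) *
            (k * ((4 * lam / (z - z₀) ^ 3) * (u z) ^ 2 - 2 * u z * u' z)) := this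
      _ = k * (-(Real.exp (2 * lam / (z - z₀) ^ 2) *
            ((-(4 * lam) / (z - z₀) ^ 3) * (u z) ^ 2 + 2 * u z * u' z))) := by ring
  -- integrabilities
  have hi1 : IntervalIntegrable (fun z => Real.exp (2 * lam / (z - z₀) ^ 2) * (u z) ^ 2)
      volume (-R) R := by
    apply ContinuousOn.intervalIntegrable
    rw [Set.uIcc_of_le hRR]; exact hφc.mul (hucont.pow 2)
  have hi2 : IntervalIntegrable (fun z => Real.exp (2 * lam / (z - z₀) ^ 2) * (u' z) ^ 2)
      volume (-R) R := by
    apply ContinuousOn.intervalIntegrable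
    rw [Set.uIcc_of_le hRR]; exact hφc.mul (hu'.pow 2)
  have hiL : IntervalIntegrable
      (fun z => Real.exp (2 * lam / (z - z₀) ^ 2) * (k ^ 2 * (u z) ^ 2 - (u' z) ^ 2))
      volume (-R) R := by
    apply ContinuousOn.intervalIntegrable
    rw [Set.uIcc_of_le hRR]
    exact hφc.mul ((continuousOn_const.mul (hucont.pow 2)).sub (hu'.pow 2))
  have hiR : IntervalIntegrable
      (fun z => k * (-(Real.exp (2 * lam / (z - z₀) ^ 2) *
        ((-(4 * lam) / (z - z₀) ^ 3) * (u z) ^ 2 + 2 * u z * u' z)))) volume (-R) R := by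
    apply ContinuousOn.intervalIntegrable
    rw [Set.uIcc_of_le hRR]
    exact continuousOn_const.mul hg'c.neg
  have hmono := intervalIntegral.integral_mono_on hRR hiL hiR hpt
  have eL : (∫ z in (-R)..R,
        Real.exp (2 * lam / (z - z₀) ^ 2) * (k ^ 2 * (u z) ^ 2 - (u' z) ^ 2))
      = k ^ 2 * (∫ z in (-R)..R, Real.exp (2 * lam / (z - z₀) ^ 2) * (u z) ^ 2)
        - ∫ z in (-R)..R, Real.exp (2 * lam / (z - z₀) ^ 2) * (u' z) ^ 2 := by
    have e : (fun z => Real.exp (2 * lam / (z - z₀) ^ 2) * (k ^ 2 * (u z) ^ 2 - (u' z) ^ 2))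
        = (fun z => k ^ 2 * (Real.exp (2 * lam / (z - z₀) ^ 2) * (u z) ^ 2)
            - Real.exp (2 * lam / (z - z₀) ^ 2) * (u' z) ^ 2) := by
      funext z; ring
    rw [e, intervalIntegral.integral_sub (hi1.const_mul _) hi2,
      intervalIntegral.integral_const_mul]
  have eR : (∫ z in (-R)..R, k * (-(Real.exp (2 * lam / (z - z₀) ^ 2) *
        ((-(4 * lam) / (z - z₀) ^ 3) * (u z) ^ 2 + 2 * u z * u' z))))
      = k * (Real.exp (2 * lam / (-R - z₀) ^ 2) * (u (-R)) ^ 2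
          - Real.exp (2 * lam / (R - z₀) ^ 2) * (u R) ^ 2) := by
    rw [intervalIntegral.integral_const_mul, intervalIntegral.integral_neg, hFTC]
    ring
  rw [eL, eR] at hmono
  have hgR : (0:ℝ) ≤ Real.exp (2 * lam / (R - z₀) ^ 2) * (u R) ^ 2 := by positivity
  nlinarith [mul_nonneg hkpos.le hgR]

set_option maxHeartbeats 1000000 in
/-- Intermediate Carleman estimate (inequality (3.11)): as in the final Carleman estimate,
but the weighted integral of `|w'|²` still enters with a negative sign. -/
theorem carleman_estimate_intermediate (R z₀ : ℝ) (hR : 0 < R) (hz₀ : z₀ < -R) :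
    ∃ lam₀ C : ℝ, 1 < lam₀ ∧ 0 < C ∧
      ∀ lam : ℝ, lam₀ ≤ lam →
      ∀ w w' w'' : ℝ → ℝ,
        (∀ z ∈ Set.Icc (-R) R, HasDerivWithinAt w (w' z) (Set.Icc (-R) R) z) →
        (∀ z ∈ Set.Icc (-R) R, HasDerivWithinAt w' (w'' z) (Set.Icc (-R) R) z) →
        ContinuousOn w'' (Set.Icc (-R) R) →
        (∫ z in (-R)..R, Real.exp (2 * lam / (z - z₀) ^ 2) * (w'' z) ^ 2) ≥
          -C * Real.exp (2 * lam / (R - z₀) ^ 2) * (lam ^ 3 * (w R) ^ 2 + lam * (w' R) ^ 2)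
          - C * Real.exp (2 * lam / (-R - z₀) ^ 2) *
              (lam ^ 3 * (w (-R)) ^ 2 + lam * (w' (-R)) ^ 2)
          + C * lam ^ 3 * (∫ z in (-R)..R, Real.exp (2 * lam / (z - z₀) ^ 2) * (w z) ^ 2)
          - C * lam * ∫ z in (-R)..R, Real.exp (2 * lam / (z - z₀) ^ 2) * (w' z) ^ 2 := by
  have hRR : (-R) ≤ R := by linarith
  have hd : (0:ℝ) < R - z₀ := by linarith
  set δ := 2 / (R - z₀) ^ 3 with hδdef
  have hδ : 0 < δ := by positivity
  set C := min 1 (δ ^ 4) with hCdef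
  have hCpos : 0 < C := lt_min one_pos (by positivity)
  have hC1 : C ≤ 1 := min_le_left _ _
  have hCδ : C ≤ δ ^ 4 := min_le_right _ _
  have hq1 : 0 ≤ δ ^ 3 / C := by positivity
  have hq2 : 0 ≤ δ / C := by positivity
  refine ⟨2 + δ ^ 3 / C + δ / C, C, by linarith, hCpos, ?_⟩
  intro lam hlam w w' w'' hw hw' hw''c
  have hlam2 : 2 ≤ lam := by linarith
  have hlampos : 0 < lam := by linarith
  have hw'c : ContinuousOn w' (Set.Icc (-R) R) := fun z hz => (hw' z hz).continuousWithinAt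
  have h1 := carleman_aux R z₀ hR hz₀ lam hlampos w w' hw hw'c
  have h2 := carleman_aux R z₀ hR hz₀ lam hlampos w' w'' hw' hw''c
  rw [← hδdef] at h1 h2
  clear hw hw' hw''c
  set M := Real.exp (2 * lam / (-R - z₀) ^ 2) with hM
  have hMpos : 0 < M := Real.exp_pos _
  set I₀ := ∫ z in (-R)..R, Real.exp (2 * lam / (z - z₀) ^ 2) * (w z) ^ 2 with hI0
  set I₁ := ∫ z in (-R)..R, Real.exp (2 * lam / (z - z₀) ^ 2) * (w' z) ^ 2 with hI1
  set L := ∫ z in (-R)..R, Real.exp (2 * lam / (z - z₀) ^ 2) * (w'' z) ^ 2 with hL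
  have hI0n : 0 ≤ I₀ :=
    intervalIntegral.integral_nonneg hRR (fun z _ => by positivity)
  have hI1n : 0 ≤ I₁ :=
    intervalIntegral.integral_nonneg hRR (fun z _ => by positivity)
  have hLn : 0 ≤ L :=
    intervalIntegral.integral_nonneg hRR (fun z _ => by positivity)
  clear_value M I₀ I₁ L δ C
  clear hI0 hI1 hL hM hδdef hCdef
  -- key iterated estimate
  have hKey : (lam * δ) ^ 4 * I₀ ≤ (lam * δ) ^ 3 * M * (w (-R)) ^ 2
      + (lam * δ) * M * (w' (-R)) ^ 2 + L := by
    nlinarith [mul_le_mul_of_nonneg_left h1 (sq_nonneg (lam * δ)), h2]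
  -- constants
  have hexp : C * (2 + δ ^ 3 / C + δ / C) = 2 * C + δ ^ 3 + δ := by
    field_simp
  have hCl : C * (2 + δ ^ 3 / C + δ / C) ≤ C * lam := by
    exact mul_le_mul_of_nonneg_left hlam hCpos.le
  have hCl3 : δ ^ 3 ≤ C * lam := by nlinarith
  have hCl1 : δ ≤ C * lam := by nlinarith
  -- main chained bound, multiplied by lam
  have step1 : C * lam ^ 4 * I₀ ≤ δ ^ 4 * lam ^ 4 * I₀ := by
    nlinarith [mul_le_mul_of_nonneg_right hCδ (mul_nonneg (pow_nonneg hlampos.le 4) hI0n)]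
  have step2 : lam ^ 3 * δ ^ 3 * M * (w (-R)) ^ 2 ≤ C * lam ^ 4 * M * (w (-R)) ^ 2 := by
    nlinarith [mul_le_mul_of_nonneg_right hCl3
      (mul_nonneg (mul_nonneg (pow_nonneg hlampos.le 3) hMpos.le) (sq_nonneg (w (-R))))]
  have step3 : lam * δ * M * (w' (-R)) ^ 2 ≤ C * lam ^ 2 * M * (w' (-R)) ^ 2 := by
    nlinarith [mul_le_mul_of_nonneg_right hCl1
      (mul_nonneg (mul_nonneg hlampos.le hMpos.le) (sq_nonneg (w' (-R))))]
  have step4 : L ≤ lam * L := by nlinarith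
  have hmul : lam * (C * lam ^ 3 * I₀)
      ≤ lam * (C * lam ^ 3 * M * (w (-R)) ^ 2 + C * lam * M * (w' (-R)) ^ 2 + L) := by
    nlinarith [hKey, step1, step2, step3, step4]
  have hfin : C * lam ^ 3 * I₀
      ≤ C * lam ^ 3 * M * (w (-R)) ^ 2 + C * lam * M * (w' (-R)) ^ 2 + L :=
    le_of_mul_le_mul_left hmul hlampos
  have hb1 : 0 ≤ C * Real.exp (2 * lam / (R - z₀) ^ 2) *
      (lam ^ 3 * (w R) ^ 2 + lam * (w' R) ^ 2) := by
    have h0 : 0 ≤ lam ^ 3 * (w R) ^ 2 + lam * (w' R) ^ 2 :=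
      add_nonneg (mul_nonneg (pow_nonneg hlampos.le 3) (sq_nonneg _))
        (mul_nonneg hlampos.le (sq_nonneg _))
    exact mul_nonneg (mul_nonneg hCpos.le (Real.exp_pos _).le) h0
  have hb2 : 0 ≤ C * lam * I₁ := mul_nonneg (mul_nonneg hCpos.le hlampos.le) hI1n
  nlinarith [hb1, hb2, hfin, hMpos, hCpos, sq_nonneg (w (-R)), sq_nonneg (w' (-R))]
end

section
/- Let R > 0 and z₀ < −R be fixed. There exists a constant C > 0, depending only on R and z₀, such that for every λ > 0 and every w ∈ C²([−R, R]; ℝ), ∫_{−R}^{R} e^{2λ(z−z₀)^{−2}} |w''(z)|² dz ≥ −C [ e^{2λ(R−z₀)^{−2}} |w'(R)|² + e^{2λ(−R−z₀)^{−2}} |w'(−R)|² ] + 2λ ∫_{−R}^{R} (z − z₀)^{−3} e^{2λ(z−z₀)^{−2}} |w'(z)|² dz − ∫_{−R}^{R} e^{2λ(z−z₀)^{−2}} |w'(z)|² dz. -/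
/-- Inequality (3.12): there is `C > 0` depending only on `R` and `z₀` such that for every
`λ > 0` and every `w ∈ C²([-R, R]; ℝ)`,
`∫ e^{2λ(z-z₀)⁻²}|w''|² ≥ -C[e^{2λ(R-z₀)⁻²}|w'(R)|² + e^{2λ(-R-z₀)⁻²}|w'(-R)|²]
  + 2λ ∫ (z-z₀)⁻³ e^{2λ(z-z₀)⁻²}|w'|² - ∫ e^{2λ(z-z₀)⁻²}|w'|²`. -/
theorem carleman_first_derivative_step (R z₀ : ℝ) (hR : 0 < R) (hz₀ : z₀ < -R) :
    ∃ C : ℝ, 0 < C ∧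
      ∀ lam : ℝ, 0 < lam →
      ∀ w w' w'' : ℝ → ℝ,
        (∀ z ∈ Set.Icc (-R) R, HasDerivWithinAt w (w' z) (Set.Icc (-R) R) z) →
        (∀ z ∈ Set.Icc (-R) R, HasDerivWithinAt w' (w'' z) (Set.Icc (-R) R) z) →
        ContinuousOn w'' (Set.Icc (-R) R) →
        (∫ z in (-R)..R, Real.exp (2 * lam / (z - z₀) ^ 2) * (w'' z) ^ 2) ≥
          -C * (Real.exp (2 * lam / (R - z₀) ^ 2) * (w' R) ^ 2
              + Real.exp (2 * lam / (-R - z₀) ^ 2) * (w' (-R)) ^ 2)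
          + 2 * lam * (∫ z in (-R)..R,
              (z - z₀)⁻¹ ^ 3 * Real.exp (2 * lam / (z - z₀) ^ 2) * (w' z) ^ 2)
          - ∫ z in (-R)..R, Real.exp (2 * lam / (z - z₀) ^ 2) * (w' z) ^ 2 := by
  refine ⟨1, one_pos, ?_⟩
  intro lam hlam w w' w'' hw hw' hw''c
  clear hw
  have hRR : (-R : ℝ) ≤ R := by linarith
  have huIcc : Set.uIcc (-R) R = Set.Icc (-R) R := Set.uIcc_of_le hRR
  have hpos : ∀ z ∈ Set.Icc (-R) R, 0 < z - z₀ := by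
    intro z hz; have := hz.1; linarith
  set φ : ℝ → ℝ := fun z => Real.exp (2 * lam / (z - z₀) ^ 2) with hφdef
  have hφpos : ∀ z, 0 < φ z := fun z => by rw [hφdef]; exact Real.exp_pos _
  have hw'cont : ContinuousOn w' (Set.Icc (-R) R) := fun z hz =>
    (hw' z hz).continuousWithinAt
  have hsc : ContinuousOn (fun z : ℝ => z - z₀) (Set.Icc (-R) R) :=
    continuousOn_id.sub continuousOn_const
  have hφcont : ContinuousOn φ (Set.Icc (-R) R) := by
    rw [hφdef]
    apply Real.continuous_exp.comp_continuousOn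
    exact ContinuousOn.div continuousOn_const (hsc.pow 2)
      (fun z hz => pow_ne_zero 2 (hpos z hz).ne')
  have hinvcont : ContinuousOn (fun z : ℝ => (z - z₀)⁻¹ ^ 3) (Set.Icc (-R) R) :=
    (hsc.inv₀ fun z hz => (hpos z hz).ne').pow 3
  have hII : ∀ f : ℝ → ℝ, ContinuousOn f (Set.Icc (-R) R) →
      IntervalIntegrable f MeasureTheory.volume (-R) R := by
    intro f hf
    exact ContinuousOn.intervalIntegrable (huIcc ▸ hf)
  -- derivative of φ
  have hφderiv : ∀ z ∈ Set.Icc (-R) R,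
      HasDerivAt φ (-(4 * lam * (z - z₀)⁻¹ ^ 3) * φ z) z := by
    intro z hz
    have hz0 : z - z₀ ≠ 0 := (hpos z hz).ne'
    have h1 : HasDerivAt (fun z : ℝ => (z - z₀) ^ 2) (2 * (z - z₀)) z := by
      simpa using ((hasDerivAt_id z).sub_const z₀).fun_pow 2
    have h2 : HasDerivAt (fun z : ℝ => 2 * lam / (z - z₀) ^ 2)
        (-(4 * lam * (z - z₀)⁻¹ ^ 3)) z := by
      have h3 := (hasDerivAt_const z (2 * lam)).fun_div h1 (pow_ne_zero 2 hz0)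
      refine h3.congr_deriv ?_
      field_simp
      ring
    have h4 := h2.exp
    rw [hφdef]
    convert h4 using 1
    ring
  -- F and its derivative
  set F : ℝ → ℝ := fun z => φ z * (w' z) ^ 2 with hFdef
  set F' : ℝ → ℝ := fun z =>
    -(4 * lam * (z - z₀)⁻¹ ^ 3) * (φ z * (w' z) ^ 2) + φ z * (2 * w' z * w'' z)
    with hF'def
  have hFderiv : ∀ z ∈ Set.Icc (-R) R,
      HasDerivWithinAt F (F' z) (Set.Icc (-R) R) z := by
    intro z hz
    have h := ((hφderiv z hz).hasDerivWithinAt.fun_mul ((hw' z hz).fun_pow 2))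
    rw [hFdef, hF'def]
    refine h.congr_deriv ?_
    ring
  have hF'cont : ContinuousOn F' (Set.Icc (-R) R) := by
    rw [hF'def]
    exact (((hinvcont.const_smul (4 * lam)).neg.mul
        (hφcont.mul (hw'cont.pow 2)))).add
      (hφcont.mul ((continuousOn_const.mul hw'cont).mul hw''c))
  have hFTC : (∫ z in (-R)..R, F' z) = F R - F (-R) := by
    apply intervalIntegral.integral_eq_sub_of_hasDeriv_right_of_le hRR
    · exact hφcont.mul (hw'cont.pow 2)
    · intro x hx
      exact ((hFderiv x (Set.Ioo_subset_Icc_self hx)).hasDerivAt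
        (Icc_mem_nhds hx.1 hx.2)).hasDerivWithinAt
    · exact hII F' hF'cont
  -- integrability of pieces
  have hI1 : IntervalIntegrable (fun z => -(4 * lam * (z - z₀)⁻¹ ^ 3) * (φ z * (w' z) ^ 2))
      MeasureTheory.volume (-R) R :=
    hII _ ((hinvcont.const_smul (4 * lam)).neg.mul (hφcont.mul (hw'cont.pow 2)))
  have hI2 : IntervalIntegrable (fun z => φ z * (2 * w' z * w'' z))
      MeasureTheory.volume (-R) R :=
    hII _ (hφcont.mul ((continuousOn_const.mul hw'cont).mul hw''c))
  have hIA : IntervalIntegrable (fun z => φ z * (w'' z) ^ 2) MeasureTheory.volume (-R) R :=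
    hII _ (hφcont.mul (hw''c.pow 2))
  have hIB : IntervalIntegrable (fun z => φ z * (w' z) ^ 2) MeasureTheory.volume (-R) R :=
    hII _ (hφcont.mul (hw'cont.pow 2))
  -- split the FTC integral
  have hsplit : (∫ z in (-R)..R, F' z)
      = (∫ z in (-R)..R, -(4 * lam * (z - z₀)⁻¹ ^ 3) * (φ z * (w' z) ^ 2))
        + ∫ z in (-R)..R, φ z * (2 * w' z * w'' z) := by
    rw [hF'def]
    exact intervalIntegral.integral_add hI1 hI2
  -- first piece equals -4λ J
  have hJeq : (∫ z in (-R)..R, -(4 * lam * (z - z₀)⁻¹ ^ 3) * (φ z * (w' z) ^ 2))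
      = -(4 * lam) * ∫ z in (-R)..R, (z - z₀)⁻¹ ^ 3 * φ z * (w' z) ^ 2 := by
    rw [← intervalIntegral.integral_const_mul]
    congr 1
    funext z
    ring
  -- J ≥ 0
  have hJnn : 0 ≤ ∫ z in (-R)..R, (z - z₀)⁻¹ ^ 3 * φ z * (w' z) ^ 2 := by
    apply intervalIntegral.integral_nonneg hRR
    intro u hu
    exact mul_nonneg (mul_nonneg (pow_nonneg (inv_nonneg.2 (hpos u hu).le) 3)
      (hφpos u).le) (sq_nonneg _)
  -- pointwise square inequality
  have hsq : 0 ≤ ∫ z in (-R)..R, φ z * (w'' z - w' z) ^ 2 := by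
    apply intervalIntegral.integral_nonneg hRR
    intro u _
    exact mul_nonneg (hφpos u).le (sq_nonneg _)
  have hsqeq : (∫ z in (-R)..R, φ z * (w'' z - w' z) ^ 2)
      = (∫ z in (-R)..R, φ z * (w'' z) ^ 2)
        - (∫ z in (-R)..R, φ z * (2 * w' z * w'' z))
        + ∫ z in (-R)..R, φ z * (w' z) ^ 2 := by
    rw [← intervalIntegral.integral_sub hIA hI2,
        ← intervalIntegral.integral_add (hIA.sub hI2) hIB]
    congr 1
    funext z
    ring
  have hFRnn : 0 ≤ F R := mul_nonneg (hφpos R).le (sq_nonneg _)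
  have hFR : F R = φ R * (w' R) ^ 2 := rfl
  have hFmR : F (-R) = φ (-R) * (w' (-R)) ^ 2 := rfl
  -- conclude
  have hK : (∫ z in (-R)..R, φ z * (2 * w' z * w'' z))
      = F R - F (-R)
        + (4 * lam) * ∫ z in (-R)..R, (z - z₀)⁻¹ ^ 3 * φ z * (w' z) ^ 2 := by
    have := hFTC
    rw [hsplit, hJeq] at this
    linarith
  have hmain : (∫ z in (-R)..R, φ z * (w'' z) ^ 2)
      ≥ -(1 : ℝ) * (φ R * (w' R) ^ 2 + φ (-R) * (w' (-R)) ^ 2)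
        + 2 * lam * (∫ z in (-R)..R, (z - z₀)⁻¹ ^ 3 * φ z * (w' z) ^ 2)
        - ∫ z in (-R)..R, φ z * (w' z) ^ 2 := by
    have h4 : 2 * lam * (∫ z in (-R)..R, (z - z₀)⁻¹ ^ 3 * φ z * (w' z) ^ 2) ≥ 0 :=
      mul_nonneg (by linarith) hJnn
    nlinarith [hsq, hsqeq, hK, hFRnn, hJnn, hlam]
  exact hmain
end

section
/- Let R > 0, z₀ < −R, n ≥ 1 an integer, and C₀ > 0. There exist a number λ₁ > 1 and a constant C > 0, depending only on R, z₀, and C₀, with the following property: for every λ ≥ λ₁, every h ∈ C²([−R, R]; ℝⁿ), and every real number A ≥ 0, if ∫_{−R}^{R} e^{2λ(z−z₀)^{−2}} |h''(z)|² dz + λ⁴ e^{2λ(R−z₀)^{−2}} ( |h(R)|² + |h'(R)|² ) + λ⁴ e^{2λ(−R−z₀)^{−2}} ( |h(−R)|² + |h'(−R)|² ) ≤ C₀ [ ∫_{−R}^{R} e^{2λ(z−z₀)^{−2}} |h(z)|² dz + A ], then ∫_{−R}^{R} e^{2λ(z−z₀)^{−2}} |h(z)|² dz ≤ (C / λ³)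 A. -/
open Set intervalIntegral

/-- Cauchy–Schwarz for interval integrals of continuous functions. -/
lemma carleman_cs_aux {f g : ℝ → ℝ} {a b : ℝ} (hab : a ≤ b)
    (hf : ContinuousOn f (Set.Icc a b)) (hg : ContinuousOn g (Set.Icc a b)) :
    (∫ s in a..b, f s * g s) ^ 2 ≤ (∫ s in a..b, f s ^ 2) * (∫ s in a..b, g s ^ 2) := by
  have hu : Set.uIcc a b = Set.Icc a b := Set.uIcc_of_le hab
  have hfi : IntervalIntegrable (fun s => f s ^ 2) MeasureTheory.volume a b :=
    (by rw [hu]; exact hf.pow 2 : ContinuousOn (fun s => f s ^ 2) (Set.uIcc a b)).intervalIntegrable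
  have hgi : IntervalIntegrable (fun s => g s ^ 2) MeasureTheory.volume a b :=
    (by rw [hu]; exact hg.pow 2 : ContinuousOn (fun s => g s ^ 2) (Set.uIcc a b)).intervalIntegrable
  have hfgi : IntervalIntegrable (fun s => f s * g s) MeasureTheory.volume a b :=
    (by rw [hu]; exact hf.mul hg : ContinuousOn (fun s => f s * g s) (Set.uIcc a b)).intervalIntegrable
  set F := ∫ s in a..b, f s ^ 2 with hF
  set G := ∫ s in a..b, f s * g s with hG
  set Q := ∫ s in a..b, g s ^ 2 with hQ
  have key : ∀ t : ℝ, 0 ≤ F * (t * t) + (-(2 * G)) * t + Q := by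
    intro t
    have h2 : (0:ℝ) ≤ ∫ s in a..b, (t * f s - g s) ^ 2 :=
      intervalIntegral.integral_nonneg hab (fun s _ => sq_nonneg _)
    have h3 : (∫ s in a..b, (t * f s - g s) ^ 2)
        = ∫ s in a..b, ((t * t) * f s ^ 2 + (-(2 * t)) * (f s * g s) + g s ^ 2) :=
      intervalIntegral.integral_congr (fun s _ => by ring)
    rw [h3, intervalIntegral.integral_add (((hfi.const_mul _).add (hfgi.const_mul _)))
        hgi, intervalIntegral.integral_add (hfi.const_mul _) (hfgi.const_mul _),
      intervalIntegral.integral_const_mul, intervalIntegral.integral_const_mul] at h2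
    nlinarith [h2]
  have hd := discrim_le_zero key
  rw [discrim] at hd
  nlinarith [hd]

/-- Taylor formula with integral remainder at order 2, from `-R`. -/
lemma carleman_taylor_aux {n : ℕ} {R : ℝ} {h h' h'' : ℝ → EuclideanSpace ℝ (Fin n)}
    (hh : ∀ z ∈ Set.Icc (-R) R, HasDerivWithinAt h (h' z) (Set.Icc (-R) R) z)
    (hh' : ∀ z ∈ Set.Icc (-R) R, HasDerivWithinAt h' (h'' z) (Set.Icc (-R) R) z)
    (hc : ContinuousOn h'' (Set.Icc (-R) R))
    {z : ℝ} (hz : z ∈ Set.Icc (-R) R) :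
    h z = h (-R) + (z + R) • h' (-R) + ∫ s in (-R)..z, (z - s) • h'' s := by
  have hsub : Set.Icc (-R) z ⊆ Set.Icc (-R) R := Set.Icc_subset_Icc le_rfl hz.2
  have hch : ContinuousOn h (Set.Icc (-R) R) := fun s hs => (hh s hs).continuousWithinAt
  have hch' : ContinuousOn h' (Set.Icc (-R) R) := fun s hs => (hh' s hs).continuousWithinAt
  have hg : ContinuousOn (fun s => h s + (z - s) • h' s) (Set.Icc (-R) z) :=
    (hch.mono hsub).add (((continuousOn_const.sub continuousOn_id).smul (hch'.mono hsub)))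
  have hderiv : ∀ s ∈ Set.Ioo (-R) z,
      HasDerivWithinAt (fun s => h s + (z - s) • h' s) ((z - s) • h'' s) (Set.Ioi s) s := by
    intro s hs
    have hsmem : Set.Icc (-R) R ∈ nhds s :=
      Icc_mem_nhds (by linarith [hs.1]) (by linarith [hs.2, hz.2])
    have h1 : HasDerivAt h (h' s) s := (hh s (hsub ⟨hs.1.le, hs.2.le⟩)).hasDerivAt hsmem
    have h2 : HasDerivAt h' (h'' s) s := (hh' s (hsub ⟨hs.1.le, hs.2.le⟩)).hasDerivAt hsmem
    have h3 : HasDerivAt (fun s => z - s) (-1 : ℝ) s := by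
      simpa using (hasDerivAt_id s).const_sub z
    have h4 : HasDerivAt (fun s => h s + (z - s) • h' s)
        (h' s + ((z - s) • h'' s + (-1 : ℝ) • h' s)) s := h1.add (h3.smul h2)
    have h5 : h' s + ((z - s) • h'' s + (-1 : ℝ) • h' s) = (z - s) • h'' s := by
      module
    exact (h5 ▸ h4).hasDerivWithinAt
  have hint : IntervalIntegrable (fun s => (z - s) • h'' s) MeasureTheory.volume (-R) z := by
    apply ContinuousOn.intervalIntegrable
    rw [Set.uIcc_of_le hz.1]
    exact (continuousOn_const.sub continuousOn_id).smul (hc.mono hsub)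
  have := intervalIntegral.integral_eq_sub_of_hasDeriv_right_of_le hz.1 hg hderiv hint
  rw [this]
  simp only [sub_self, zero_smul, add_zero, sub_neg_eq_add]
  abel_nf

/-- Weight gap: the Carleman weight exponent decreases at a linear rate. -/
lemma carleman_phi_gap {R z₀ s z : ℝ} (hz₀ : z₀ < -R) (hs : -R ≤ s) (hsz : s ≤ z)
    (hz : z ≤ R) :
    2 * (-R - z₀) / (R - z₀) ^ 4 * (z - s) ≤ 1 / (s - z₀) ^ 2 - 1 / (z - z₀) ^ 2 := by
  have hs0 : 0 < s - z₀ := by linarith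
  have hz0 : 0 < z - z₀ := by linarith
  have hd : 0 < R - z₀ := by linarith
  have key : 1 / (s - z₀) ^ 2 - 1 / (z - z₀) ^ 2
      = (z - s) * ((z - z₀) + (s - z₀)) / ((s - z₀) ^ 2 * (z - z₀) ^ 2) := by
    field_simp
    ring
  rw [key, div_mul_eq_mul_div, div_le_div_iff₀ (by positivity) (by positivity)]
  have h1a : (s - z₀) ^ 2 ≤ (R - z₀) ^ 2 := by nlinarith
  have h1b : (z - z₀) ^ 2 ≤ (R - z₀) ^ 2 := by nlinarith
  have h1 : (s - z₀) ^ 2 * (z - z₀) ^ 2 ≤ (R - z₀) ^ 4 := by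
    nlinarith [mul_le_mul h1a h1b (by positivity : (0:ℝ) ≤ (z - z₀) ^ 2)
      (by positivity : (0:ℝ) ≤ (R - z₀) ^ 2)]
  have h2 : 2 * (-R - z₀) ≤ (z - z₀) + (s - z₀) := by linarith
  have h3 : 0 ≤ 2 * (-R - z₀) := by linarith
  have h4 : 0 ≤ z - s := by linarith
  nlinarith [mul_le_mul h2 h1 (by positivity) (by linarith),
    mul_nonneg h4 (mul_nonneg h3 (by positivity : (0:ℝ) ≤ (s - z₀) ^ 2 * (z - z₀) ^ 2))]

/-- `u² e^{-au} ≤ (16/a²) e^{-au/2}`. -/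
lemma carleman_sq_exp_aux {a u : ℝ} (ha : 0 < a) (hu : 0 ≤ u) :
    u ^ 2 * Real.exp (-(a * u)) ≤ 16 / a ^ 2 * Real.exp (-(a / 2 * u)) := by
  have h1 : a * u / 4 + 1 ≤ Real.exp (a * u / 4) := Real.add_one_le_exp _
  have h2 : (a * u / 4 + 1) ^ 2 ≤ Real.exp (a / 2 * u) := by
    calc (a * u / 4 + 1) ^ 2 ≤ Real.exp (a * u / 4) ^ 2 := by
          apply pow_le_pow_left₀ (by positivity) h1
      _ = Real.exp (a / 2 * u) := by
          rw [← Real.exp_nat_mul]; norm_num; ring_nf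
  have h3 : u ^ 2 ≤ 16 / a ^ 2 * Real.exp (a / 2 * u) := by
    have h4 : a ^ 2 * u ^ 2 / 16 ≤ Real.exp (a / 2 * u) := by nlinarith
    rw [div_mul_eq_mul_div, le_div_iff₀ (by positivity : (0:ℝ) < a ^ 2)]
    nlinarith [h4]
  calc u ^ 2 * Real.exp (-(a * u)) ≤ (16 / a ^ 2 * Real.exp (a / 2 * u)) * Real.exp (-(a * u)) := by
        apply mul_le_mul_of_nonneg_right h3 (Real.exp_nonneg _)
    _ = 16 / a ^ 2 * Real.exp (-(a / 2 * u)) := by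
        rw [mul_assoc, ← Real.exp_add]; ring_nf

/-- Exponential interval integral bound. -/
lemma carleman_exp_int_aux {a c z : ℝ} (ha : 0 < a) (hcz : c ≤ z) :
    (∫ s in c..z, Real.exp (a / 2 * (s - z))) ≤ 2 / a := by
  have hF : ∀ s : ℝ, HasDerivAt (fun s => 2 / a * Real.exp (a / 2 * (s - z)))
      (Real.exp (a / 2 * (s - z))) s := by
    intro s
    have h1 : HasDerivAt (fun s : ℝ => a / 2 * (s - z)) (a / 2) s := by
      simpa using ((hasDerivAt_id s).sub_const z).const_mul (a / 2)
    have h2 := (h1.exp).const_mul (2 / a)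
    exact h2.congr_deriv (by field_simp)
  have hint : IntervalIntegrable (fun s => Real.exp (a / 2 * (s - z)))
      MeasureTheory.volume c z :=
    (Real.continuous_exp.comp (by continuity)).intervalIntegrable _ _
  rw [intervalIntegral.integral_eq_sub_of_hasDerivAt (fun s _ => hF s) hint]
  have h0 : Real.exp (a / 2 * (z - z)) = 1 := by simp
  have h1 : 0 < Real.exp (a / 2 * (c - z)) := Real.exp_pos _
  rw [h0]
  have : 0 < 2 / a := by positivity
  nlinarith

set_option maxHeartbeats 1000000 in
/-- The absorption step of the Carleman–Picard iteration: there are `λ₁ > 1` and `C > 0`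
depending only on `R`, `z₀`, and `C₀`, such that for every `λ ≥ λ₁`, every
`h ∈ C²([-R, R]; ℝⁿ)`, and every `A ≥ 0`, if the Carleman-weighted quasi-reversibility
inequality holds, then `∫ e^{2λ(z-z₀)⁻²} ‖h‖² ≤ (C/λ³) A`. -/
theorem carleman_picard_absorption (R z₀ C₀ : ℝ) (hR : 0 < R) (hz₀ : z₀ < -R)
    (hC₀ : 0 < C₀) :
    ∃ lam₁ C : ℝ, 1 < lam₁ ∧ 0 < C ∧
      ∀ n : ℕ, 1 ≤ n →
      ∀ lam : ℝ, lam₁ ≤ lam →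
      ∀ h h' h'' : ℝ → EuclideanSpace ℝ (Fin n),
        (∀ z ∈ Set.Icc (-R) R, HasDerivWithinAt h (h' z) (Set.Icc (-R) R) z) →
        (∀ z ∈ Set.Icc (-R) R, HasDerivWithinAt h' (h'' z) (Set.Icc (-R) R) z) →
        ContinuousOn h'' (Set.Icc (-R) R) →
        ∀ A : ℝ, 0 ≤ A →
        ((∫ z in (-R)..R, Real.exp (2 * lam / (z - z₀) ^ 2) * ‖h'' z‖ ^ 2)
          + lam ^ 4 * Real.exp (2 * lam / (R - z₀) ^ 2) * (‖h R‖ ^ 2 + ‖h' R‖ ^ 2)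
          + lam ^ 4 * Real.exp (2 * lam / (-R - z₀) ^ 2) * (‖h (-R)‖ ^ 2 + ‖h' (-R)‖ ^ 2)
          ≤ C₀ * ((∫ z in (-R)..R, Real.exp (2 * lam / (z - z₀) ^ 2) * ‖h z‖ ^ 2) + A)) →
        (∫ z in (-R)..R, Real.exp (2 * lam / (z - z₀) ^ 2) * ‖h z‖ ^ 2)
          ≤ (C / lam ^ 3) * A := by
  have hd₁ : (0:ℝ) < -R - z₀ := by linarith
  have hd₂ : (0:ℝ) < R - z₀ := by linarith
  set c₀ : ℝ := 2 * (-R - z₀) / (R - z₀) ^ 4 with hc₀def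
  have hc₀ : 0 < c₀ := by positivity
  set K₁ : ℝ := 6 * R * (1 + 4 * R ^ 2) * C₀ + 24 * R * C₀ / c₀ ^ 3 with hK₁def
  have hK₁ : 0 < K₁ := by positivity
  refine ⟨2 + 2 * K₁, 2 * K₁, by linarith, by linarith, ?_⟩
  intro n hn lam hlam h h' h'' hh hh' hcc A hA hyp
  have hl1 : (1:ℝ) ≤ lam := by linarith only [hlam, hK₁]
  have hl0 : (0:ℝ) < lam := by linarith only [hl1]
  have hRR : -R ≤ R := by linarith only [hR]
  set a : ℝ := 2 * lam * c₀ with hadef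
  have ha : 0 < a := by positivity
  set I := ∫ z in (-R)..R, Real.exp (2 * lam / (z - z₀) ^ 2) * ‖h z‖ ^ 2 with hIdef
  set D := ∫ z in (-R)..R, Real.exp (2 * lam / (z - z₀) ^ 2) * ‖h'' z‖ ^ 2 with hDdef
  set W := Real.exp (2 * lam / (-R - z₀) ^ 2) * (‖h (-R)‖ ^ 2 + ‖h' (-R)‖ ^ 2) with hWdef
  set M : ℝ := 3 * (1 + 4 * R ^ 2) * W + 96 / a ^ 3 * D with hMdef
  -- continuity facts
  have hpos : ∀ s ∈ Set.Icc (-R) R, (0:ℝ) < s - z₀ := fun s hs => by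
    have h1 := hs.1; linarith only [h1, hz₀]
  have hne : ∀ s ∈ Set.Icc (-R) R, ((s - z₀) ^ 2 : ℝ) ≠ 0 := fun s hs => by
    have := hpos s hs; positivity
  have hbase : ContinuousOn (fun s : ℝ => (s - z₀) ^ 2) (Set.Icc (-R) R) :=
    ((continuous_id.sub continuous_const).pow 2).continuousOn
  have hwcont : ContinuousOn (fun s => Real.exp (2 * lam / (s - z₀) ^ 2)) (Set.Icc (-R) R) :=
    Real.continuous_exp.comp_continuousOn (continuousOn_const.div hbase hne)
  have hwhalf1 : ContinuousOn (fun s => Real.exp (-(lam / (s - z₀) ^ 2))) (Set.Icc (-R) R) :=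
    Real.continuous_exp.comp_continuousOn (continuousOn_const.div hbase hne).neg
  have hwhalf2 : ContinuousOn (fun s => Real.exp (lam / (s - z₀) ^ 2)) (Set.Icc (-R) R) :=
    Real.continuous_exp.comp_continuousOn (continuousOn_const.div hbase hne)
  have hch : ContinuousOn h (Set.Icc (-R) R) := fun s hs => (hh s hs).continuousWithinAt
  have hIint : IntervalIntegrable
      (fun z => Real.exp (2 * lam / (z - z₀) ^ 2) * ‖h z‖ ^ 2) MeasureTheory.volume (-R) R := by
    apply ContinuousOn.intervalIntegrable
    rw [Set.uIcc_of_le hRR]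
    exact hwcont.mul (hch.norm.pow 2)
  have hDint : IntervalIntegrable
      (fun z => Real.exp (2 * lam / (z - z₀) ^ 2) * ‖h'' z‖ ^ 2) MeasureTheory.volume (-R) R := by
    apply ContinuousOn.intervalIntegrable
    rw [Set.uIcc_of_le hRR]
    exact hwcont.mul (hcc.norm.pow 2)
  have hI0 : 0 ≤ I :=
    intervalIntegral.integral_nonneg hRR (fun z _ => by positivity)
  have hD0 : 0 ≤ D :=
    intervalIntegral.integral_nonneg hRR (fun z _ => by positivity)
  -- extracting the two bounds from the hypothesis
  have hb1 : 0 ≤ lam ^ 4 * Real.exp (2 * lam / (R - z₀) ^ 2) * (‖h R‖ ^ 2 + ‖h' R‖ ^ 2) := by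
    positivity
  have hb2 : 0 ≤ lam ^ 4 * Real.exp (2 * lam / (-R - z₀) ^ 2)
      * (‖h (-R)‖ ^ 2 + ‖h' (-R)‖ ^ 2) := by positivity
  have h6 : D ≤ C₀ * (I + A) := by linarith only [hyp, hb1, hb2]
  have h5 : lam ^ 4 * W ≤ C₀ * (I + A) := by
    rw [hWdef, ← mul_assoc]
    linarith only [hyp, hb1, hD0]
  have hW0 : 0 ≤ W := by rw [hWdef]; positivity
  -- the pointwise bound
  have hpt : ∀ z ∈ Set.Icc (-R) R,
      Real.exp (2 * lam / (z - z₀) ^ 2) * ‖h z‖ ^ 2 ≤ M := by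
    intro z hz
    have hsubz : Set.Icc (-R) z ⊆ Set.Icc (-R) R := Set.Icc_subset_Icc le_rfl hz.2
    set wz := Real.exp (2 * lam / (z - z₀) ^ 2) with hwzdef
    have hwz0 : 0 < wz := Real.exp_pos _
    set cz := ∫ s in (-R)..z, (z - s) * ‖h'' s‖ with hczdef
    have hcz0 : 0 ≤ cz := intervalIntegral.integral_nonneg hz.1
      (fun s hs => mul_nonneg (by linarith only [hs.2]) (norm_nonneg _))
    -- Taylor + triangle inequality
    have hT := carleman_taylor_aux hh hh' hcc hz
    have hnormint : ‖∫ s in (-R)..z, (z - s) • h'' s‖ ≤ cz := by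
      refine le_trans (intervalIntegral.norm_integral_le_integral_norm hz.1) (le_of_eq ?_)
      refine intervalIntegral.integral_congr (fun s hs => ?_)
      rw [Set.uIcc_of_le hz.1] at hs
      rw [norm_smul, Real.norm_eq_abs, abs_of_nonneg (by linarith only [hs.2])]
    have hn : ‖h z‖ ≤ ‖h (-R)‖ + 2 * R * ‖h' (-R)‖ + cz := by
      rw [hT]
      refine le_trans (norm_add₃_le) ?_
      have hsm : ‖(z + R) • h' (-R)‖ ≤ 2 * R * ‖h' (-R)‖ := by
        rw [norm_smul, Real.norm_eq_abs, abs_of_nonneg (by linarith only [hz.1])]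
        have hzR : z + R ≤ 2 * R := by linarith only [hz.2]
        exact mul_le_mul_of_nonneg_right hzR (norm_nonneg _)
      linarith only [hnormint, hsm]
    have hsq : ‖h z‖ ^ 2 ≤ 3 * (‖h (-R)‖ ^ 2 + 4 * R ^ 2 * ‖h' (-R)‖ ^ 2 + cz ^ 2) := by
      have hq1 : ‖h z‖ ^ 2 ≤ (‖h (-R)‖ + 2 * R * ‖h' (-R)‖ + cz) ^ 2 :=
        pow_le_pow_left₀ (norm_nonneg _) hn 2
      have hq2 : (‖h (-R)‖ + 2 * R * ‖h' (-R)‖ + cz) ^ 2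
          ≤ 3 * (‖h (-R)‖ ^ 2 + 4 * R ^ 2 * ‖h' (-R)‖ ^ 2 + cz ^ 2) := by
        linarith only [sq_nonneg (‖h (-R)‖ - 2 * R * ‖h' (-R)‖), sq_nonneg (‖h (-R)‖ - cz),
          sq_nonneg (2 * R * ‖h' (-R)‖ - cz)]
      linarith only [hq1, hq2]
    -- monotonicity of the weight
    have hwmono : wz ≤ Real.exp (2 * lam / (-R - z₀) ^ 2) := by
      rw [hwzdef, Real.exp_le_exp]
      have hzp : 0 < z - z₀ := hpos z hz
      have hfac : (0:ℝ) ≤ (z + R) * ((z - z₀) + (-R - z₀)) :=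
        mul_nonneg (by linarith only [hz.1]) (by linarith only [hzp, hd₁])
      exact div_le_div_of_nonneg_left (by positivity) (by positivity)
        (by linarith only [hfac])
    -- Cauchy–Schwarz part
    set f : ℝ → ℝ := fun s => (z - s) * Real.exp (-(lam / (s - z₀) ^ 2)) with hfdef
    set g : ℝ → ℝ := fun s => Real.exp (lam / (s - z₀) ^ 2) * ‖h'' s‖ with hgdef
    have hfc : ContinuousOn f (Set.Icc (-R) z) :=
      ((continuousOn_const.sub continuousOn_id).mul (hwhalf1.mono hsubz))
    have hgc : ContinuousOn g (Set.Icc (-R) z) :=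
      ((hwhalf2.mono hsubz).mul (hcc.norm.mono hsubz))
    have hcs := carleman_cs_aux hz.1 hfc hgc
    have hfg : (∫ s in (-R)..z, f s * g s) = cz := by
      refine intervalIntegral.integral_congr (fun s hs => ?_)
      show (z - s) * Real.exp (-(lam / (s - z₀) ^ 2)) * (Real.exp (lam / (s - z₀) ^ 2) * ‖h'' s‖)
        = (z - s) * ‖h'' s‖
      calc (z - s) * Real.exp (-(lam / (s - z₀) ^ 2)) * (Real.exp (lam / (s - z₀) ^ 2) * ‖h'' s‖)
          = (z - s) * ‖h'' s‖
            * (Real.exp (-(lam / (s - z₀) ^ 2)) * Real.exp (lam / (s - z₀) ^ 2)) := by ring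
        _ = (z - s) * ‖h'' s‖ := by rw [← Real.exp_add]; simp
    have hG : (∫ s in (-R)..z, g s ^ 2) ≤ D := by
      have hcongr : (∫ s in (-R)..z, g s ^ 2)
          = ∫ s in (-R)..z, Real.exp (2 * lam / (s - z₀) ^ 2) * ‖h'' s‖ ^ 2 := by
        refine intervalIntegral.integral_congr (fun s hs => ?_)
        show (Real.exp (lam / (s - z₀) ^ 2) * ‖h'' s‖) ^ 2
          = Real.exp (2 * lam / (s - z₀) ^ 2) * ‖h'' s‖ ^ 2
        rw [mul_pow, sq (Real.exp _), ← Real.exp_add]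
        ring_nf
      rw [hcongr, hDdef]
      refine intervalIntegral.integral_mono_interval le_rfl hz.1 hz.2
        (MeasureTheory.ae_of_all _ (fun s => by positivity)) hDint
    have hG0 : 0 ≤ ∫ s in (-R)..z, g s ^ 2 :=
      intervalIntegral.integral_nonneg hz.1 (fun s _ => sq_nonneg _)
    -- the weighted kernel bound
    have hF : wz * (∫ s in (-R)..z, f s ^ 2) ≤ 32 / a ^ 3 := by
      rw [← intervalIntegral.integral_const_mul]
      have hptw : ∀ s ∈ Set.Icc (-R) z,
          wz * f s ^ 2 ≤ 16 / a ^ 2 * Real.exp (a / 2 * (s - z)) := by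
        intro s hs
        have hzs : 0 ≤ z - s := by linarith only [hs.2]
        have e1 : Real.exp (2 * lam / (z - z₀) ^ 2) * Real.exp (-(lam / (s - z₀) ^ 2)) ^ 2
            ≤ Real.exp (-(a * (z - s))) := by
          rw [sq (Real.exp _), ← Real.exp_add, ← Real.exp_add, Real.exp_le_exp]
          have hgap := carleman_phi_gap hz₀ hs.1 hs.2 hz.2
          have hmul := mul_le_mul_of_nonneg_left hgap (by positivity : (0:ℝ) ≤ 2 * lam)
          rw [hadef, hc₀def]
          have hsub := sub_nonneg.2 hmul
          rw [← sub_nonneg]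
          have e : -(2 * lam * (2 * (-R - z₀) / (R - z₀) ^ 4) * (z - s)) -
              (2 * lam / (z - z₀) ^ 2 + (-(lam / (s - z₀) ^ 2) + -(lam / (s - z₀) ^ 2)))
              = 2 * lam * (1 / (s - z₀) ^ 2 - 1 / (z - z₀) ^ 2)
                - 2 * lam * (2 * (-R - z₀) / (R - z₀) ^ 4 * (z - s)) := by ring
          rw [e]; exact hsub
        have e2 : wz * f s ^ 2
            = (z - s) ^ 2 * (Real.exp (2 * lam / (z - z₀) ^ 2)
              * Real.exp (-(lam / (s - z₀) ^ 2)) ^ 2) := by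
          rw [hwzdef, hfdef]; ring
        calc wz * f s ^ 2 ≤ (z - s) ^ 2 * Real.exp (-(a * (z - s))) := by
              rw [e2]; exact mul_le_mul_of_nonneg_left e1 (sq_nonneg _)
          _ ≤ 16 / a ^ 2 * Real.exp (-(a / 2 * (z - s))) := carleman_sq_exp_aux ha hzs
          _ = 16 / a ^ 2 * Real.exp (a / 2 * (s - z)) := by ring_nf
      have hint1 : IntervalIntegrable (fun s => wz * f s ^ 2) MeasureTheory.volume (-R) z := by
        apply ContinuousOn.intervalIntegrable
        rw [Set.uIcc_of_le hz.1]
        exact continuousOn_const.mul (hfc.pow 2)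
      have hint2 : IntervalIntegrable (fun s => 16 / a ^ 2 * Real.exp (a / 2 * (s - z)))
          MeasureTheory.volume (-R) z :=
        (continuous_const.mul (Real.continuous_exp.comp (by continuity))).intervalIntegrable _ _
      calc (∫ s in (-R)..z, wz * f s ^ 2)
          ≤ ∫ s in (-R)..z, 16 / a ^ 2 * Real.exp (a / 2 * (s - z)) :=
            intervalIntegral.integral_mono_on hz.1 hint1 hint2 hptw
        _ = 16 / a ^ 2 * ∫ s in (-R)..z, Real.exp (a / 2 * (s - z)) :=
            intervalIntegral.integral_const_mul _ _
        _ ≤ 16 / a ^ 2 * (2 / a) :=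
            mul_le_mul_of_nonneg_left (carleman_exp_int_aux ha hz.1) (by positivity)
        _ = 32 / a ^ 3 := by field_simp; ring
    -- combine: wz * cz² ≤ 32/a³ * D
    have hwc : wz * cz ^ 2 ≤ 32 / a ^ 3 * D := by
      have s1 : wz * cz ^ 2 ≤ wz * ((∫ s in (-R)..z, f s ^ 2) * ∫ s in (-R)..z, g s ^ 2) := by
        rw [← hfg]
        exact mul_le_mul_of_nonneg_left hcs hwz0.le
      have s2 : wz * ((∫ s in (-R)..z, f s ^ 2) * ∫ s in (-R)..z, g s ^ 2)
          ≤ 32 / a ^ 3 * D := by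
        calc wz * ((∫ s in (-R)..z, f s ^ 2) * ∫ s in (-R)..z, g s ^ 2)
            = (wz * ∫ s in (-R)..z, f s ^ 2) * ∫ s in (-R)..z, g s ^ 2 := by ring
          _ ≤ 32 / a ^ 3 * ∫ s in (-R)..z, g s ^ 2 :=
              mul_le_mul_of_nonneg_right hF hG0
          _ ≤ 32 / a ^ 3 * D := mul_le_mul_of_nonneg_left hG (by positivity)
      exact s1.trans s2
    -- put everything together
    have hwa : wz * ‖h (-R)‖ ^ 2 ≤ Real.exp (2 * lam / (-R - z₀) ^ 2) * ‖h (-R)‖ ^ 2 :=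
      mul_le_mul_of_nonneg_right hwmono (by positivity)
    have hwb : wz * ‖h' (-R)‖ ^ 2 ≤ Real.exp (2 * lam / (-R - z₀) ^ 2) * ‖h' (-R)‖ ^ 2 :=
      mul_le_mul_of_nonneg_right hwmono (by positivity)
    have hmain : wz * ‖h z‖ ^ 2
        ≤ 3 * (wz * ‖h (-R)‖ ^ 2) + 12 * R ^ 2 * (wz * ‖h' (-R)‖ ^ 2) + 3 * (wz * cz ^ 2) := by
      linarith only [mul_le_mul_of_nonneg_left hsq hwz0.le]
    rw [hMdef, hWdef]
    calc wz * ‖h z‖ ^ 2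
        ≤ 3 * (wz * ‖h (-R)‖ ^ 2) + 12 * R ^ 2 * (wz * ‖h' (-R)‖ ^ 2) + 3 * (wz * cz ^ 2) :=
          hmain
      _ ≤ 3 * (Real.exp (2 * lam / (-R - z₀) ^ 2) * ‖h (-R)‖ ^ 2)
          + 12 * R ^ 2 * (Real.exp (2 * lam / (-R - z₀) ^ 2) * ‖h' (-R)‖ ^ 2)
          + 3 * (32 / a ^ 3 * D) := by
          gcongr
      _ ≤ 3 * (1 + 4 * R ^ 2)
          * (Real.exp (2 * lam / (-R - z₀) ^ 2) * (‖h (-R)‖ ^ 2 + ‖h' (-R)‖ ^ 2))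
          + 96 / a ^ 3 * D := by
          rw [← sub_nonneg]
          have e : 3 * (1 + 4 * R ^ 2)
              * (Real.exp (2 * lam / (-R - z₀) ^ 2) * (‖h (-R)‖ ^ 2 + ‖h' (-R)‖ ^ 2))
              + 96 / a ^ 3 * D
              - (3 * (Real.exp (2 * lam / (-R - z₀) ^ 2) * ‖h (-R)‖ ^ 2)
                + 12 * R ^ 2 * (Real.exp (2 * lam / (-R - z₀) ^ 2) * ‖h' (-R)‖ ^ 2)
                + 3 * (32 / a ^ 3 * D))
              = 3 * (Real.exp (2 * lam / (-R - z₀) ^ 2) * ‖h' (-R)‖ ^ 2)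
                + 12 * (R ^ 2 * (Real.exp (2 * lam / (-R - z₀) ^ 2) * ‖h (-R)‖ ^ 2)) := by
            ring
          rw [e]
          positivity
  -- integrate the pointwise bound
  have hIle : I ≤ 2 * R * M := by
    have hmono := intervalIntegral.integral_mono_on hRR hIint intervalIntegrable_const hpt
    rw [intervalIntegral.integral_const, smul_eq_mul] at hmono
    calc I ≤ (R - -R) * M := hmono
      _ = 2 * R * M := by ring
  -- final absorption
  have h5' : lam ^ 3 * W ≤ C₀ * (I + A) := by
    refine le_trans ?_ h5
    have h34 : lam ^ 3 ≤ lam ^ 4 := pow_le_pow_right₀ hl1 (by norm_num)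
    exact mul_le_mul_of_nonneg_right h34 hW0
  have hlam3 : lam ^ 3 * I ≤ K₁ * (I + A) := by
    calc lam ^ 3 * I ≤ lam ^ 3 * (2 * R * M) :=
          mul_le_mul_of_nonneg_left hIle (by positivity)
      _ = 6 * R * (1 + 4 * R ^ 2) * (lam ^ 3 * W) + 24 * R / c₀ ^ 3 * D := by
          rw [hMdef, hadef]
          field_simp
          ring
      _ ≤ 6 * R * (1 + 4 * R ^ 2) * (C₀ * (I + A)) + 24 * R / c₀ ^ 3 * (C₀ * (I + A)) := by
          gcongr
      _ = K₁ * (I + A) := by rw [hK₁def]; field_simp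
  have hlamK : 2 * K₁ ≤ lam ^ 3 := by
    have hk1 : 2 * K₁ ≤ lam := by linarith only [hlam]
    have hk2 : lam ≤ lam ^ 3 := le_self_pow₀ hl1 (by norm_num)
    linarith only [hk1, hk2]
  rw [div_mul_eq_mul_div, le_div_iff₀ (by positivity : (0:ℝ) < lam ^ 3)]
  linarith only [hlam3, hI0, hA, hlamK, mul_nonneg (sub_nonneg.2 hlamK) hI0]
end

section
/- Let d ≥ 1, let Ω ⊂ ℝ^d, let c : ℝ^d → ℝ be continuous, let p : ℝ^d → ℝ be twice continuously differentiable with p(x) ≠ 0 for all x in the closure of Ω, and let u : ℝ^d × [0, ∞) → ℝ be continuous and three times continuously differentiable on ℝ^d × (0, ∞), with ∂_t u and Δ_x u extending continuously to t = 0. Suppose ∂_t u = Δ_x u + c u on ℝ^d × (0, ∞) and u(x, 0) = p(x) for all x ∈ ℝ^d. Set v := ∂_t u. Then: (i) v(x, 0) = Δp(x) + c(x) p(x) for all x ∈ Ω; (ii) c(x) = (v(x, 0) − Δp(x)) / p(x) for all x ∈ Ω; and (iii) v satisfies the nonlinear, nonlocal equation ∂_t v(x, t) = Δ_x v(x, t)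 + ((v(x, 0) − Δp(x)) / p(x)) v(x, t) for all (x, t) ∈ Ω × (0, ∞). -/
/-- The spatial Laplacian of a function `f : ℝᵈ → ℝ` at `x`, defined as the sum of the
second derivatives of `f` along the coordinate directions. -/
noncomputable def spatialLaplacian {d : ℕ} (f : EuclideanSpace ℝ (Fin d) → ℝ)
    (x : EuclideanSpace ℝ (Fin d)) : ℝ :=
  ∑ i : Fin d, iteratedDeriv 2 (fun s : ℝ => f (x + s • EuclideanSpace.single i (1 : ℝ))) 0



section CoeffElimHelpers

open Filter Metric Set

section Helpers
variable {X : Type*} [NormedAddCommGroup X] [NormedSpace ℝ X]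

lemma hasDerivAt_line (x v : X) (s : ℝ) :
    HasDerivAt (fun s : ℝ => x + s • v) v s := by
  simpa using ((hasDerivAt_id s).smul_const v).const_add x

lemma deriv_line {F' : Type*} [NormedAddCommGroup F'] [NormedSpace ℝ F']
    {f : X → F'} {f' : X →L[ℝ] F'} {x v : X} {s : ℝ}
    (h : HasFDerivAt f f' (x + s • v)) :
    HasDerivAt (fun s : ℝ => f (x + s • v)) (f' v) s :=
  h.comp_hasDerivAt s (hasDerivAt_line x v s)

lemma it2_eq (g : ℝ → ℝ) : iteratedDeriv 2 g = deriv (deriv g) := by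
  rw [show (2:ℕ) = 1+1 from rfl, iteratedDeriv_succ, iteratedDeriv_one]

lemma iteratedDeriv_two_line {f : X → ℝ} {f' : X → X →L[ℝ] ℝ} {f'' : X →L[ℝ] X →L[ℝ] ℝ}
    {x : X} (v : X)
    (h1 : ∀ᶠ y in nhds x, HasFDerivAt f (f' y) y)
    (h2 : HasFDerivAt f' f'' x) :
    iteratedDeriv 2 (fun s : ℝ => f (x + s • v)) 0 = f'' v v := by
  have hline : Continuous fun s : ℝ => x + s • v := by continuity
  have h0 : x + (0:ℝ) • v = x := by simp
  have hev : ∀ᶠ s : ℝ in nhds 0, HasFDerivAt f (f' (x + s • v)) (x + s • v) := by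
    have ht := hline.tendsto 0
    simp only [zero_smul, add_zero] at ht
    exact ht.eventually h1
  have hd1 : (deriv fun s : ℝ => f (x + s • v)) =ᶠ[nhds 0] fun s => f' (x + s • v) v :=
    hev.mono fun s hs => (deriv_line hs).deriv
  have hc : HasDerivAt (fun s : ℝ => f' (x + s • v)) (f'' v) 0 := by
    refine deriv_line ?_
    rwa [h0]
  have key : HasDerivAt (fun s : ℝ => f' (x + s • v) v) (f'' v v) 0 := by
    have := (ContinuousLinearMap.apply ℝ ℝ v).hasFDerivAt.comp_hasDerivAt 0 hc
    exact this
  rw [it2_eq, hd1.deriv_eq, key.deriv]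

end Helpers

lemma contDiff_two_deriv {g : ℝ → ℝ} (hg : ContDiff ℝ 2 g) : ContDiff ℝ 1 (deriv g) :=
  (contDiff_succ_iff_deriv.mp (show ContDiff ℝ (1+1) g from by exact_mod_cast hg)).2.2

lemma it2_add {A B : ℝ → ℝ} (hA : ContDiff ℝ 2 A) (hB : ContDiff ℝ 2 B) :
    iteratedDeriv 2 (fun s => A s + B s) 0 = iteratedDeriv 2 A 0 + iteratedDeriv 2 B 0 := by
  have h1 : deriv (fun s => A s + B s) = fun s => deriv A s + deriv B s := by
    funext s
    exact deriv_add (hA.differentiable two_ne_zero s) (hB.differentiable two_ne_zero s)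
  rw [it2_eq, it2_eq, it2_eq, h1]
  exact deriv_add ((contDiff_two_deriv hA).differentiable one_ne_zero 0)
    ((contDiff_two_deriv hB).differentiable one_ne_zero 0)

lemma it2_neg (A : ℝ → ℝ) :
    iteratedDeriv 2 (fun s => -(A s)) 0 = -iteratedDeriv 2 A 0 := by
  rw [it2_eq, it2_eq]
  have : deriv (fun s => -(A s)) = fun s => -(deriv A s) := funext fun s => deriv.neg
  rw [this]
  exact deriv.neg

lemma it2_poly (b₀ b₁ a : ℝ) : iteratedDeriv 2 (fun s : ℝ => b₀ + b₁ * s + a * s^2) 0 = 2*a := by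
  have h1 : deriv (fun s : ℝ => b₀ + b₁ * s + a * s^2) = fun s => b₁ + a * (2*s) := by
    funext s
    have hb : HasDerivAt (fun s : ℝ => b₀ + b₁ * s) b₁ s := by
      simpa using ((hasDerivAt_id s).const_mul b₁).const_add b₀
    have hq : HasDerivAt (fun s : ℝ => a * s^2) (a * (2*s)) s := by
      simpa using (hasDerivAt_pow 2 s).const_mul a
    exact (hb.add hq).deriv
  rw [it2_eq, h1]
  have : HasDerivAt (fun s : ℝ => b₁ + a * (2*s)) (a*2) 0 := by
    simpa using (((hasDerivAt_id (0:ℝ)).const_mul 2).const_mul a).const_add b₁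
  rw [this.deriv]; ring

lemma second_deriv_nonneg_of_localmin {g : ℝ → ℝ} (hg : ContDiff ℝ 2 g)
    (hmin : IsLocalMin g 0) : 0 ≤ iteratedDeriv 2 g 0 := by
  by_contra hneg
  push_neg at hneg
  rw [it2_eq] at hneg
  have hg' : ContDiff ℝ 1 (deriv g) := contDiff_two_deriv hg
  have h0 : deriv g 0 = 0 := hmin.deriv_eq_zero
  have hD : HasDerivAt (deriv g) (deriv (deriv g) 0) 0 :=
    (hg'.differentiable one_ne_zero 0).hasDerivAt
  have hslope := hasDerivAt_iff_tendsto_slope.mp hD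
  have hev : ∀ᶠ s in nhdsWithin (0:ℝ) {(0:ℝ)}ᶜ, slope (deriv g) 0 s < 0 :=
    hslope.eventually_lt_const hneg
  have hev' : ∀ᶠ s in nhdsWithin (0:ℝ) (Ioi 0), deriv g s < 0 := by
    have hmono : nhdsWithin (0:ℝ) (Ioi 0) ≤ nhdsWithin (0:ℝ) {(0:ℝ)}ᶜ :=
      nhdsWithin_mono 0 (fun s hs => ne_of_gt hs)
    filter_upwards [hev.filter_mono hmono, self_mem_nhdsWithin] with s hs hs'
    rw [slope_def_field, h0, sub_zero, sub_zero] at hs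
    have hs0 : (0:ℝ) < s := hs'
    rcases div_neg_iff.mp hs with ⟨h1, h2⟩ | ⟨h1, h2⟩ <;> linarith
  obtain ⟨δ, hδpos, hδ⟩ := Metric.eventually_nhds_iff.mp (eventually_nhdsWithin_iff.mp hev')
  have hder_neg : ∀ s ∈ Ioo (0:ℝ) δ, deriv g s < 0 := by
    intro s hs
    exact hδ (show dist s 0 < δ by
      rw [Real.dist_eq, sub_zero, abs_of_pos hs.1]; exact hs.2) hs.1
  have hanti : StrictAntiOn g (Icc 0 δ) := by
    refine strictAntiOn_of_deriv_neg (convex_Icc 0 δ) (hg.continuous.continuousOn) ?_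
    intro s hs
    rw [interior_Icc] at hs
    exact hder_neg s hs
  have hcontr : ∀ᶠ s in nhdsWithin (0:ℝ) (Ioi 0), False := by
    filter_upwards [(hmin.filter_mono nhdsWithin_le_nhds :
        ∀ᶠ s in nhdsWithin (0:ℝ) (Ioi 0), g 0 ≤ g s),
      Ioo_mem_nhdsGT_of_mem (Set.mem_Ico.mpr ⟨le_rfl, hδpos⟩)] with s hs1 hs2
    have : g s < g 0 := hanti (Set.left_mem_Icc.mpr hδpos.le)
      ⟨hs2.1.le, hs2.2.le⟩ hs2.1
    linarith
  exact hcontr.exists.elim (fun _ h => h)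

lemma line_contDiff {X : Type*} [NormedAddCommGroup X] [NormedSpace ℝ X]
    {f : X → ℝ} {n : ℕ∞} (hf : ContDiff ℝ n f) (x v : X) :
    ContDiff ℝ n fun s : ℝ => f (x + s • v) :=
  hf.comp (contDiff_const.add (contDiff_id.smul contDiff_const))

lemma min_principle {d : ℕ} {φ : EuclideanSpace ℝ (Fin d) → ℝ} (hφ : ContDiff ℝ 2 φ)
    {x₀ : EuclideanSpace ℝ (Fin d)} {r : ℝ} (hr : 0 < r)
    (hlap : ∀ x ∈ closedBall x₀ r, spatialLaplacian φ x < 0) :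
    ∃ y, dist y x₀ = r ∧ φ y ≤ φ x₀ := by
  obtain ⟨z, hz, hzmin⟩ := (isCompact_closedBall x₀ r).exists_isMinOn
    ⟨x₀, mem_closedBall_self hr.le⟩ hφ.continuous.continuousOn
  rcases eq_or_lt_of_le (mem_closedBall.mp hz) with heq | hlt
  · exact ⟨z, heq, hzmin (mem_closedBall_self hr.le)⟩
  · exfalso
    have key : ∀ i : Fin d,
        0 ≤ iteratedDeriv 2 (fun s : ℝ => φ (z + s • EuclideanSpace.single i (1:ℝ))) 0 := by
      intro i
      apply second_deriv_nonneg_of_localmin (line_contDiff hφ _ _)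
      have hρ : 0 < r - dist z x₀ := by linarith
      refine Metric.eventually_nhds_iff.mpr ⟨r - dist z x₀, hρ, fun {s} hs => ?_⟩
      have hnorm : dist (z + s • EuclideanSpace.single i (1:ℝ)) z = |s| := by
        simp [dist_eq_norm, norm_smul, EuclideanSpace.norm_single]
      have hmem : z + s • EuclideanSpace.single i (1:ℝ) ∈ closedBall x₀ r := by
        have := dist_triangle (z + s • EuclideanSpace.single i (1:ℝ)) z x₀
        rw [Real.dist_eq, sub_zero] at hs
        rw [mem_closedBall]
        rw [hnorm] at this
        linarith
      have h0 : z + (0:ℝ) • EuclideanSpace.single i (1:ℝ) = z := by simp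
      calc φ (z + (0:ℝ) • EuclideanSpace.single i (1:ℝ)) = φ z := by rw [h0]
        _ ≤ _ := hzmin hmem
    have h1 : spatialLaplacian φ z < 0 := hlap z hz
    have h2 : 0 ≤ spatialLaplacian φ z := Finset.sum_nonneg fun i _ => key i
    linarith

lemma spatialLaplacian_eq_fderiv {d : ℕ} {f : EuclideanSpace ℝ (Fin d) → ℝ}
    (hf : ContDiff ℝ 2 f) (x : EuclideanSpace ℝ (Fin d)) :
    spatialLaplacian f x = ∑ i : Fin d,
      fderiv ℝ (fderiv ℝ f) x (EuclideanSpace.single i (1:ℝ)) (EuclideanSpace.single i (1:ℝ)) := by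
  refine Finset.sum_congr rfl fun i _ => ?_
  refine iteratedDeriv_two_line _
    (Eventually.of_forall fun y => (hf.differentiable two_ne_zero y).hasFDerivAt) ?_
  exact (((hf.fderiv_right (m := 1) (by norm_num)).differentiable one_ne_zero) x).hasFDerivAt

lemma spatialLaplacian_continuous {d : ℕ} {f : EuclideanSpace ℝ (Fin d) → ℝ}
    (hf : ContDiff ℝ 2 f) : Continuous (spatialLaplacian f) := by
  have : spatialLaplacian f = fun x => ∑ i : Fin d,
      fderiv ℝ (fderiv ℝ f) x (EuclideanSpace.single i (1:ℝ)) (EuclideanSpace.single i (1:ℝ)) :=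
    funext fun x => spatialLaplacian_eq_fderiv hf x
  rw [this]
  refine continuous_finset_sum _ fun i _ => ?_
  exact (((hf.fderiv_right (m := 1) (by norm_num)).continuous_fderiv one_ne_zero).clm_apply
    continuous_const).clm_apply continuous_const

lemma spatialLaplacian_neg {d : ℕ} (f : EuclideanSpace ℝ (Fin d) → ℝ)
    (x : EuclideanSpace ℝ (Fin d)) :
    spatialLaplacian (fun ξ => -(f ξ)) x = -spatialLaplacian f x := by
  simp only [spatialLaplacian, ← Finset.sum_neg_distrib]
  exact Finset.sum_congr rfl fun i _ => it2_neg _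

lemma one_sided {d : ℕ} (hd : 1 ≤ d) {p : EuclideanSpace ℝ (Fin d) → ℝ} (hp : ContDiff ℝ 2 p)
    {w ℓ : EuclideanSpace ℝ (Fin d) → ℝ → ℝ} (x₀ : EuclideanSpace ℝ (Fin d))
    (hw_cont : ContinuousOn (fun q : EuclideanSpace ℝ (Fin d) × ℝ => w q.1 q.2)
      (univ ×ˢ Ici (0:ℝ)))
    (hslice : ∀ t : ℝ, 0 < t → ContDiff ℝ 2 (fun ξ => w ξ t))
    (hℓ_cont : ContinuousWithinAt (fun q : EuclideanSpace ℝ (Fin d) × ℝ => ℓ q.1 q.2)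
      (univ ×ˢ Ici (0:ℝ)) (x₀, 0))
    (hℓeq : ∀ x, ∀ t : ℝ, 0 < t → ℓ x t = spatialLaplacian (fun ξ => w ξ t) x)
    (hw0 : ∀ x, w x 0 = p x) :
    spatialLaplacian p x₀ ≤ ℓ x₀ 0 := by
  by_contra hgt
  push_neg at hgt
  obtain ⟨A, hA⟩ : ∃ A, A = ℓ x₀ 0 := ⟨_, rfl⟩
  obtain ⟨B, hB⟩ : ∃ B, B = spatialLaplacian p x₀ := ⟨_, rfl⟩
  obtain ⟨ε, hε⟩ : ∃ ε : ℝ, ε = (B - A) / 3 := ⟨_, rfl⟩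
  rw [← hA] at hgt; rw [← hB] at hgt
  have hεpos : 0 < ε := by rw [hε]; linarith
  have hd0 : (0:ℝ) < (d:ℝ) := by exact_mod_cast Nat.lt_of_lt_of_le Nat.zero_lt_one hd
  -- continuity of Δp near x₀
  obtain ⟨r₁, hr₁pos, hr₁⟩ := Metric.continuousAt_iff.mp
    ((spatialLaplacian_continuous hp).continuousAt (x := x₀)) (ε/2) (by positivity)
  -- continuity of ℓ at (x₀, 0)
  obtain ⟨r₂, hr₂pos, hr₂⟩ := Metric.continuousWithinAt_iff.mp hℓ_cont (ε/2) (by positivity)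
  obtain ⟨r, hrdef⟩ : ∃ r : ℝ, r = min (r₁/2) (r₂/2) := ⟨_, rfl⟩
  have hrpos : 0 < r := by rw [hrdef]; positivity
  -- uniform continuity of w on a compact set
  have hK : IsCompact ((closedBall x₀ r) ×ˢ (Icc (0:ℝ) 1)) :=
    (isCompact_closedBall _ _).prod isCompact_Icc
  have hUC := hK.uniformContinuousOn_of_continuous
    (hw_cont.mono (fun q hq => ⟨trivial, hq.2.1⟩))
  obtain ⟨η, hηdef⟩ : ∃ η : ℝ, η = ε * r^2 / (8*(d:ℝ)) := ⟨_, rfl⟩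
  have hηpos : 0 < η := by rw [hηdef]; positivity
  obtain ⟨δ₃, hδ₃pos, hδ₃⟩ := Metric.uniformContinuousOn_iff.mp hUC η hηpos
  obtain ⟨t, htdef⟩ : ∃ t : ℝ, t = min (min (r₂/2) (δ₃/2)) (1/2 : ℝ) := ⟨_, rfl⟩
  have htpos : 0 < t := by rw [htdef]; positivity
  have ht1 : t ≤ 1 := htdef ▸ le_trans (min_le_right _ _) (by norm_num)
  have htr₂ : t ≤ r₂/2 := htdef ▸ le_trans (min_le_left _ _) (min_le_left _ _)
  have htδ₃ : t < δ₃ := htdef ▸ lt_of_le_of_lt (le_trans (min_le_left _ _) (min_le_right _ _)) (by linarith)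
  -- closeness of w(·,t) to p on the ball
  have hwb : ∀ x ∈ closedBall x₀ r, |w x t - p x| < η := by
    intro x hx
    have h1 : (x, t) ∈ (closedBall x₀ r) ×ˢ (Icc (0:ℝ) 1) := ⟨hx, ⟨htpos.le, ht1⟩⟩
    have h2 : (x, (0:ℝ)) ∈ (closedBall x₀ r) ×ˢ (Icc (0:ℝ) 1) := ⟨hx, ⟨le_rfl, by norm_num⟩⟩
    have hdist : dist ((x, t) : _ × ℝ) (x, 0) < δ₃ := by
      rw [Prod.dist_eq, max_lt_iff]
      refine ⟨by simpa using hδ₃pos, ?_⟩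
      rw [Real.dist_eq, sub_zero, abs_of_pos htpos]; exact htδ₃
    have := hδ₃ _ h1 _ h2 hdist
    rw [Real.dist_eq] at this
    rwa [hw0 x] at this
  -- the comparison function
  obtain ⟨a, hadef⟩ : ∃ a : ℝ, a = ε / (2*(d:ℝ)) := ⟨_, rfl⟩
  have hapos : 0 < a := by rw [hadef]; positivity
  obtain ⟨φ, hφdef⟩ : ∃ φ : EuclideanSpace ℝ (Fin d) → ℝ,
    φ = fun ξ => w ξ t - p ξ + a * ‖ξ - x₀‖^2 := ⟨_, rfl⟩
  have hφsmooth : ContDiff ℝ 2 φ := by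
    rw [hφdef]
    refine ((hslice t htpos).sub hp).add (contDiff_const.mul ?_)
    exact (contDiff_norm_sq ℝ).comp (contDiff_id.sub contDiff_const)
  -- Laplacian computation for φ
  have hlapφ : ∀ x, spatialLaplacian φ x
      = ℓ x t - spatialLaplacian p x + 2*a*(d:ℝ) := by
    intro x
    have hsum : ∀ i : Fin d,
        iteratedDeriv 2 (fun s : ℝ => φ (x + s • EuclideanSpace.single i (1:ℝ))) 0
        = iteratedDeriv 2 (fun s : ℝ => w (x + s • EuclideanSpace.single i (1:ℝ)) t) 0
          - iteratedDeriv 2 (fun s : ℝ => p (x + s • EuclideanSpace.single i (1:ℝ))) 0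
          + 2*a := by
      intro i
      set e := EuclideanSpace.single i (1:ℝ) with hedef
      have hW : ContDiff ℝ 2 (fun s : ℝ => w (x + s • e) t) :=
        line_contDiff (hslice t htpos) x e
      have hP : ContDiff ℝ 2 (fun s : ℝ => p (x + s • e)) := line_contDiff hp x e
      have hQeq : (fun s : ℝ => a * ‖(x + s • e) - x₀‖^2)
          = fun s : ℝ => (a * ‖x - x₀‖^2) + (a * (2 * inner ℝ (x - x₀) e)) * s + a * s^2 := by
        funext s
        have h1 : (x + s • e) - x₀ = (x - x₀) + s • e := by abel
        rw [h1, norm_add_sq_real, real_inner_smul_right, norm_smul,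
          EuclideanSpace.norm_single]
        simp [mul_pow]
        ring
      have hQ : ContDiff ℝ 2 (fun s : ℝ => a * ‖(x + s • e) - x₀‖^2) := by
        rw [hQeq]
        exact ((contDiff_const.mul contDiff_const).add
          (contDiff_const.mul contDiff_id)).add (contDiff_const.mul (contDiff_id.pow 2))
      have hφline : (fun s : ℝ => φ (x + s • e))
          = fun s : ℝ => (fun s => w (x + s • e) t) s
            + (-((fun s => p (x + s • e)) s) + (fun s => a * ‖(x + s • e) - x₀‖^2) s) := by
        funext s; rw [hφdef]; ring
      rw [hφline, it2_add hW ((hP.neg).add hQ), it2_add hP.neg hQ, it2_neg, hQeq, it2_poly]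
      ring
    have : spatialLaplacian φ x = ∑ i : Fin d,
        (iteratedDeriv 2 (fun s : ℝ => w (x + s • EuclideanSpace.single i (1:ℝ)) t) 0
          - iteratedDeriv 2 (fun s : ℝ => p (x + s • EuclideanSpace.single i (1:ℝ))) 0
          + 2*a) := Finset.sum_congr rfl fun i _ => hsum i
    rw [spatialLaplacian] at this ⊢
    rw [this, Finset.sum_add_distrib, Finset.sum_sub_distrib, Finset.sum_const,
      Finset.card_univ, Fintype.card_fin, hℓeq x t htpos]
    simp only [spatialLaplacian, nsmul_eq_mul]
    ring
  have hlapneg : ∀ x ∈ closedBall x₀ r, spatialLaplacian φ x < 0 := by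
    intro x hx
    rw [hlapφ x]
    have hΔp : |spatialLaplacian p x - B| < ε/2 := by
      have hxr₁ : dist x x₀ < r₁ := lt_of_le_of_lt (mem_closedBall.mp hx)
        (by rw [hrdef]; exact lt_of_le_of_lt (min_le_left _ _) (by linarith))
      have := hr₁ hxr₁
      rwa [← hB, Real.dist_eq] at this
    have hℓb : |ℓ x t - A| < ε/2 := by
      have hmem : ((x, t) : _ × ℝ) ∈ (univ ×ˢ Ici (0:ℝ)) := ⟨trivial, htpos.le⟩
      have hdist : dist ((x, t) : _ × ℝ) ((x₀, 0) : _ × ℝ) < r₂ := by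
        rw [Prod.dist_eq, max_lt_iff]
        constructor
        · exact lt_of_le_of_lt (mem_closedBall.mp hx)
            (by rw [hrdef]; exact lt_of_le_of_lt (min_le_right _ _) (by linarith))
        · rw [Real.dist_eq, sub_zero, abs_of_pos htpos]; linarith
      have := hr₂ hmem hdist
      rwa [← hA, Real.dist_eq] at this
    have h2ad : 2*a*(d:ℝ) = ε := by rw [hadef]; field_simp
    have h3ε : B - A = 3*ε := by rw [hε]; ring
    have h1' := abs_lt.mp hΔp
    have h2' := abs_lt.mp hℓb
    linarith [h1'.1, h1'.2, h2'.1, h2'.2]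
  obtain ⟨y, hy, hyle⟩ := min_principle hφsmooth hrpos hlapneg
  have hyball : y ∈ closedBall x₀ r := mem_closedBall.mpr hy.le
  have h1 := hwb y hyball
  have h2 := hwb x₀ (mem_closedBall_self hrpos.le)
  have hφy : φ y = w y t - p y + a * r^2 := by
    rw [hφdef]
    show w y t - p y + a * ‖y - x₀‖^2 = _
    have hnr : ‖y - x₀‖ = r := by rw [← dist_eq_norm]; exact hy
    rw [hnr]
  have hφx₀ : φ x₀ = w x₀ t - p x₀ := by
    rw [hφdef]
    show w x₀ t - p x₀ + a * ‖x₀ - x₀‖^2 = _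
    simp
  rw [hφy, hφx₀] at hyle
  have ha1 := abs_lt.mp h1
  have ha2 := abs_lt.mp h2
  have hcontr : a * r^2 < 2*η := by linarith [ha1.1, ha1.2, ha2.1, ha2.2]
  have e2 : η * (8*(d:ℝ)) = ε * r^2 := by rw [hηdef]; field_simp
  have e4 : (2*a*(d:ℝ)) * r^2 = ε * r^2 := by
    rw [show 2*a*(d:ℝ) = ε from by rw [hadef]; field_simp]
  have e3 : (2*η - a*r^2) * (4*(d:ℝ)) > 0 := mul_pos (by linarith) (by linarith)
  nlinarith [e2, e3, e4, mul_pos hεpos (pow_pos hrpos 2)]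

section Part3
variable {d : ℕ}
local notation "E" => EuclideanSpace ℝ (Fin d)

set_option maxHeartbeats 1000000 in
lemma part3 {u v : E → ℝ → ℝ} {c : E → ℝ}
    (hu_smooth : ContDiffOn ℝ 3 (fun q : E × ℝ => u q.1 q.2) (univ ×ˢ Ioi (0:ℝ)))
    (hv : ∀ x, ∀ t : ℝ, 0 < t → v x t = deriv (u x) t)
    (hpde : ∀ x, ∀ t : ℝ, 0 < t →
      deriv (u x) t = spatialLaplacian (fun ξ => u ξ t) x + c x * u x t)
    (x : E) (t : ℝ) (ht : 0 < t) :
    deriv (v x) t = spatialLaplacian (fun ξ => v ξ t) x + c x * v x t := by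
  classical
  set U : Set (E × ℝ) := univ ×ˢ Ioi (0:ℝ) with hUdef
  have hUopen : IsOpen U := isOpen_univ.prod isOpen_Ioi
  have hUmem : ∀ {x' : E} {t' : ℝ}, 0 < t' → ((x', t') : E × ℝ) ∈ U :=
    fun h => ⟨trivial, h⟩
  set F : E × ℝ → ℝ := fun q => u q.1 q.2 with hFdef
  set G := fderiv ℝ F with hGdef
  set H := fderiv ℝ G with hHdef
  have hGU : ContDiffOn ℝ 2 G U := hu_smooth.fderiv_of_isOpen hUopen (by norm_num)
  have hHU : ContDiffOn ℝ 1 H U := hGU.fderiv_of_isOpen hUopen (by norm_num)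
  have hFd : ∀ z ∈ U, HasFDerivAt F (G z) z := fun z hz =>
    (((hu_smooth.differentiableOn (by norm_num)).differentiableAt
      (hUopen.mem_nhds hz))).hasFDerivAt
  have hGd : ∀ z ∈ U, HasFDerivAt G (H z) z := fun z hz =>
    (((hGU.differentiableOn (by norm_num)).differentiableAt
      (hUopen.mem_nhds hz))).hasFDerivAt
  have hHd : ∀ z ∈ U, HasFDerivAt H (fderiv ℝ H z) z := fun z hz =>
    (((hHU.differentiableOn (by norm_num)).differentiableAt
      (hUopen.mem_nhds hz))).hasFDerivAt
  set wt : E × ℝ := ((0 : E), (1 : ℝ)) with hwt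
  set wi : Fin d → E × ℝ := fun i => (EuclideanSpace.single i (1:ℝ), (0:ℝ)) with hwi
  have lem1 : ∀ (x' : E) (s : ℝ), ((x', (0:ℝ)) : E × ℝ) + s • wt = (x', s) := by
    intro x' s; rw [hwt, Prod.smul_mk, Prod.mk_add_mk]; simp
  have lem2 : ∀ (x' : E) (t' s : ℝ) (i : Fin d),
      ((x', t') : E × ℝ) + s • wi i = (x' + s • EuclideanSpace.single i (1:ℝ), t') := by
    intro x' t' s i; rw [hwi, Prod.smul_mk, Prod.mk_add_mk]; simp

  have ha : ∀ (x' : E) (t' : ℝ), 0 < t' → HasDerivAt (u x') (G (x', t') wt) t' := by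
    intro x' t' ht'
    have h := deriv_line (f := F) (f' := G (x', t')) (x := ((x', (0:ℝ)) : E × ℝ))
      (v := wt) (s := t') (by rw [lem1]; exact hFd _ (hUmem ht'))
    have heq : (fun s : ℝ => F (((x', (0:ℝ)) : E × ℝ) + s • wt)) = u x' := by
      funext s; rw [lem1]
    rwa [heq] at h
  have haderiv : ∀ (x' : E) (t' : ℝ), 0 < t' → deriv (u x') t' = G (x', t') wt :=
    fun x' t' h => (ha x' t' h).deriv
  have hlapu : ∀ (x' : E) (t' : ℝ), 0 < t' →
      spatialLaplacian (fun ξ => u ξ t') x' = ∑ i : Fin d, H (x', t') (wi i) (wi i) := by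
    intro x' t' ht'
    simp only [spatialLaplacian]
    refine Finset.sum_congr rfl fun i _ => ?_
    have heq : (fun s : ℝ => u (x' + s • EuclideanSpace.single i (1:ℝ)) t')
        = fun s : ℝ => F (((x', t') : E × ℝ) + s • wi i) := by
      funext s; rw [lem2]
    rw [heq]
    exact iteratedDeriv_two_line (wi i)
      (eventually_of_mem (hUopen.mem_nhds (hUmem ht')) hFd) (hGd _ (hUmem ht'))
  set y : E × ℝ := (x, t) with hydef
  have hy : y ∈ U := hUmem ht
  set T := fderiv ℝ H y with hTdef
  set ev1 : E × ℝ → ((E × ℝ) →L[ℝ] ℝ) →L[ℝ] ℝ :=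
    fun b => ContinuousLinearMap.apply ℝ ℝ b with hev1
  set ev2 : E × ℝ → ((E × ℝ) →L[ℝ] ((E × ℝ) →L[ℝ] ℝ)) →L[ℝ] ((E × ℝ) →L[ℝ] ℝ) :=
    fun b => ContinuousLinearMap.apply ℝ ((E × ℝ) →L[ℝ] ℝ) b with hev2
  -- derivative in t of the Laplacian terms
  have hTderiv : ∀ i : Fin d,
      HasDerivAt (fun s : ℝ => H (x, s) (wi i) (wi i)) (T wt (wi i) (wi i)) t := by
    intro i
    have hD : HasFDerivAt (fun z => H z (wi i) (wi i))
        (((ev1 (wi i)).comp (ev2 (wi i))).comp T) y := by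
      refine (((hHd y hy).clm_apply (hasFDerivAt_const (wi i) y)).clm_apply
        (hasFDerivAt_const (wi i) y)).congr_fderiv ?_
      exact ContinuousLinearMap.ext fun w => by simp [hev1, hev2]; rfl
    have h := deriv_line (f := fun z => H z (wi i) (wi i))
      (f' := ((ev1 (wi i)).comp (ev2 (wi i))).comp T)
      (x := ((x, (0:ℝ)) : E × ℝ)) (v := wt) (s := t) (by rw [lem1]; exact hD)
    have heq : (fun s : ℝ => H (((x, (0:ℝ)) : E × ℝ) + s • wt) (wi i) (wi i))
        = fun s : ℝ => H (x, s) (wi i) (wi i) := by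
      funext s; rw [lem1]
    rw [heq] at h
    simpa [hev1, hev2] using h
  have hvev : v x =ᶠ[nhds t] fun s => (∑ i : Fin d, H (x, s) (wi i) (wi i)) + c x * u x s := by
    filter_upwards [Ioi_mem_nhds ht] with s hs
    rw [hv x s hs, hpde x s hs, hlapu x s hs]
  have hsum : HasDerivAt (fun s => (∑ i : Fin d, H (x, s) (wi i) (wi i)) + c x * u x s)
      ((∑ i : Fin d, T wt (wi i) (wi i)) + c x * (G y wt)) t := by
    refine (HasDerivAt.fun_sum fun i _ => hTderiv i).add ?_
    exact (ha x t ht).const_mul (c x)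
  have hderivv : deriv (v x) t = (∑ i : Fin d, T wt (wi i) (wi i)) + c x * v x t := by
    rw [hvev.deriv_eq, hsum.deriv, hv x t ht, haderiv x t ht]
  -- Laplacian of v(.,t)
  have hlapv : spatialLaplacian (fun ξ => v ξ t) x = ∑ i : Fin d, T (wi i) (wi i) wt := by
    simp only [spatialLaplacian]
    refine Finset.sum_congr rfl fun i _ => ?_
    have heq : (fun s : ℝ => v (x + s • EuclideanSpace.single i (1:ℝ)) t)
        = fun s : ℝ => (fun z => G z wt) (((x, t) : E × ℝ) + s • wi i) := by
      funext s; rw [lem2, hv _ t ht, haderiv _ t ht]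
    rw [heq]
    have h1 : ∀ᶠ z in nhds ((x, t) : E × ℝ),
        HasFDerivAt (fun z => G z wt) ((ev1 wt).comp (H z)) z := by
      refine eventually_of_mem (hUopen.mem_nhds hy) (fun z hz => ?_)
      refine ((ev1 wt).hasFDerivAt.comp z (hGd z hz)).congr_of_eventuallyEq ?_
      exact Eventually.of_forall fun z' => by simp [hev1]
    have h2 : HasFDerivAt (fun z => (ev1 wt).comp (H z))
        (((ContinuousLinearMap.compL ℝ (E × ℝ) ((E × ℝ) →L[ℝ] ℝ) ℝ) (ev1 wt)).comp T) y := by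
      refine ((hasFDerivAt_const (ev1 wt) y).clm_comp (hHd y hy)).congr_fderiv ?_
      exact ContinuousLinearMap.ext fun w => by simp; rfl
    have := iteratedDeriv_two_line (f := fun z => G z wt)
      (f' := fun z => (ev1 wt).comp (H z))
      (f'' := ((ContinuousLinearMap.compL ℝ (E × ℝ) ((E × ℝ) →L[ℝ] ℝ) ℝ) (ev1 wt)).comp T)
      (x := ((x, t) : E × ℝ)) (wi i) (by rw [← hydef] at h1 ⊢; exact h1) (by rw [← hydef]; exact h2)
    rw [this]
    simp [hev1]
  -- symmetry of derivatives
  have hsymH : ∀ z ∈ U, ∀ a b : E × ℝ, H z a b = H z b a := fun z hz a b =>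
    second_derivative_symmetric_of_eventually
      (eventually_of_mem (hUopen.mem_nhds hz) hFd) (hGd z hz) a b
  have hsymT1 : ∀ a b : E × ℝ, T a b = T b a := fun a b =>
    second_derivative_symmetric_of_eventually
      (eventually_of_mem (hUopen.mem_nhds hy) hGd) (hHd y hy) a b
  have hsymT2 : ∀ i : Fin d, T (wi i) wt (wi i) = T (wi i) (wi i) wt := by
    intro i
    have hψ : (fun z => H z wt (wi i)) =ᶠ[nhds y] (fun z => H z (wi i) wt) :=
      eventually_of_mem (hUopen.mem_nhds hy) (fun z hz => hsymH z hz wt (wi i))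
    have h1 : HasFDerivAt (fun z => H z wt (wi i))
        (((ev1 (wi i)).comp (ev2 wt)).comp T) y := by
      refine (((hHd y hy).clm_apply (hasFDerivAt_const wt y)).clm_apply
        (hasFDerivAt_const (wi i) y)).congr_fderiv ?_
      exact ContinuousLinearMap.ext fun w => by simp [hev1, hev2]; rfl
    have h2 : HasFDerivAt (fun z => H z (wi i) wt)
        (((ev1 wt).comp (ev2 (wi i))).comp T) y := by
      refine (((hHd y hy).clm_apply (hasFDerivAt_const (wi i) y)).clm_apply
        (hasFDerivAt_const wt y)).congr_fderiv ?_
      exact ContinuousLinearMap.ext fun w => by simp [hev1, hev2]; rfl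
    have h2' : HasFDerivAt (fun z => H z wt (wi i))
        (((ev1 wt).comp (ev2 (wi i))).comp T) y := h2.congr_of_eventuallyEq hψ
    have huniq := h1.unique h2'
    have happ := ContinuousLinearMap.ext_iff.mp huniq (wi i)
    simpa [hev1, hev2] using happ
  have final : ∀ i : Fin d, T wt (wi i) (wi i) = T (wi i) (wi i) wt := by
    intro i
    calc T wt (wi i) (wi i) = T (wi i) wt (wi i) := by rw [hsymT1 wt (wi i)]
      _ = T (wi i) (wi i) wt := hsymT2 i
  rw [hderivv, hlapv]
  exact congrArg₂ _ (Finset.sum_congr rfl fun i _ => final i) rfl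


end Part3

end CoeffElimHelpers

/-- Coefficient elimination: if `u` solves `∂ₜu = Δₓu + c u` with `u(·,0) = p` and `p ≠ 0`
on the closure of `Ω`, and `v` (resp. `L`) is the continuous extension to `t = 0` of
`∂ₜu` (resp. `Δₓu`), then (i) `v(x,0) = Δp(x) + c(x)p(x)` on `Ω`,
(ii) `c(x) = (v(x,0) - Δp(x))/p(x)` on `Ω`, and (iii) `v` solves the nonlinear nonlocal
equation `∂ₜv = Δₓv + ((v(·,0) - Δp)/p) v` on `Ω × (0, ∞)`. -/
theorem coefficient_elimination (d : ℕ) (hd : 1 ≤ d)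
    (Ω : Set (EuclideanSpace ℝ (Fin d)))
    (c : EuclideanSpace ℝ (Fin d) → ℝ) (hc : Continuous c)
    (p : EuclideanSpace ℝ (Fin d) → ℝ) (hp : ContDiff ℝ 2 p)
    (hpne : ∀ x ∈ closure Ω, p x ≠ 0)
    (u v L : EuclideanSpace ℝ (Fin d) → ℝ → ℝ)
    (hu_cont : ContinuousOn (fun q : EuclideanSpace ℝ (Fin d) × ℝ => u q.1 q.2)
      (Set.univ ×ˢ Set.Ici (0 : ℝ)))
    (hu_smooth : ContDiffOn ℝ 3 (fun q : EuclideanSpace ℝ (Fin d) × ℝ => u q.1 q.2)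
      (Set.univ ×ˢ Set.Ioi (0 : ℝ)))
    (hv_cont : ContinuousOn (fun q : EuclideanSpace ℝ (Fin d) × ℝ => v q.1 q.2)
      (Set.univ ×ˢ Set.Ici (0 : ℝ)))
    (hv : ∀ x, ∀ t : ℝ, 0 < t → v x t = deriv (u x) t)
    (hL_cont : ContinuousOn (fun q : EuclideanSpace ℝ (Fin d) × ℝ => L q.1 q.2)
      (Set.univ ×ˢ Set.Ici (0 : ℝ)))
    (hL : ∀ x, ∀ t : ℝ, 0 < t → L x t = spatialLaplacian (fun ξ => u ξ t) x)
    (hpde : ∀ x, ∀ t : ℝ, 0 < t →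
      deriv (u x) t = spatialLaplacian (fun ξ => u ξ t) x + c x * u x t)
    (hinit : ∀ x, u x 0 = p x) :
    (∀ x ∈ Ω, v x 0 = spatialLaplacian p x + c x * p x) ∧
    (∀ x ∈ Ω, c x = (v x 0 - spatialLaplacian p x) / p x) ∧
    (∀ x ∈ Ω, ∀ t : ℝ, 0 < t →
      deriv (v x) t = spatialLaplacian (fun ξ => v ξ t) x
        + ((v x 0 - spatialLaplacian p x) / p x) * v x t) := by
  have hUopen : IsOpen ((Set.univ : Set (EuclideanSpace ℝ (Fin d))) ×ˢ Set.Ioi (0:ℝ)) :=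
    isOpen_univ.prod isOpen_Ioi
  have hslice : ∀ t : ℝ, 0 < t → ContDiff ℝ 2 (fun ξ => u ξ t) := by
    intro t ht
    rw [contDiff_iff_contDiffAt]
    intro ξ
    have h1 : ContDiffAt ℝ 3 (fun q : _ × ℝ => u q.1 q.2) (ξ, t) :=
      hu_smooth.contDiffAt (hUopen.mem_nhds ⟨trivial, ht⟩)
    exact (h1.of_le (m := 2) (by norm_num)).comp ξ (contDiffAt_id.prodMk contDiffAt_const)
  have hkey : ∀ x : EuclideanSpace ℝ (Fin d), L x 0 = spatialLaplacian p x := by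
    intro x₀
    have side1 : spatialLaplacian p x₀ ≤ L x₀ 0 :=
      one_sided hd hp x₀ hu_cont hslice (hL_cont _ ⟨trivial, Set.self_mem_Ici⟩) hL hinit
    have side2 : spatialLaplacian (fun ξ => -(p ξ)) x₀ ≤ -(L x₀ 0) := by
      refine one_sided hd hp.neg x₀ (w := fun ξ t => -(u ξ t)) (ℓ := fun ξ t => -(L ξ t))
        hu_cont.neg (fun t ht => (hslice t ht).neg)
        ((hL_cont _ ⟨trivial, Set.self_mem_Ici⟩).neg)
        (fun x t ht => by
          show -L x t = spatialLaplacian (fun ξ => -(u ξ t)) x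
          rw [hL x t ht, spatialLaplacian_neg])
        (fun x => by show -u x 0 = -p x; rw [hinit x])
    rw [spatialLaplacian_neg] at side2
    linarith
  have hstep : ∀ x, v x 0 = L x 0 + c x * p x := by
    intro x
    have hmk : ContinuousOn (fun t : ℝ => ((x, t) : EuclideanSpace ℝ (Fin d) × ℝ))
        (Set.Ici (0:ℝ)) := (continuous_const.prodMk continuous_id).continuousOn
    have hmapsto : Set.MapsTo (fun t : ℝ => ((x, t) : EuclideanSpace ℝ (Fin d) × ℝ))
        (Set.Ici (0:ℝ)) (Set.univ ×ˢ Set.Ici (0:ℝ)) := fun t ht => ⟨trivial, ht⟩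
    have hcv : ContinuousWithinAt (fun t => v x t) (Set.Ici 0) 0 :=
      (hv_cont.comp hmk hmapsto) _ Set.self_mem_Ici
    have hcL : ContinuousWithinAt (fun t => L x t) (Set.Ici 0) 0 :=
      (hL_cont.comp hmk hmapsto) _ Set.self_mem_Ici
    have hcu : ContinuousWithinAt (fun t => u x t) (Set.Ici 0) 0 :=
      (hu_cont.comp hmk hmapsto) _ Set.self_mem_Ici
    have hfc : ContinuousWithinAt (fun t => v x t - L x t - c x * u x t) (Set.Ici 0) 0 :=
      (hcv.sub hcL).sub (continuousWithinAt_const.mul hcu)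
    have hf0 : Filter.Tendsto (fun t => v x t - L x t - c x * u x t)
        (nhdsWithin 0 (Set.Ioi 0)) (nhds (v x 0 - L x 0 - c x * u x 0)) :=
      hfc.tendsto.mono_left (nhdsWithin_mono _ Set.Ioi_subset_Ici_self)
    have hzero : Filter.Tendsto (fun t => v x t - L x t - c x * u x t)
        (nhdsWithin 0 (Set.Ioi 0)) (nhds 0) := by
      refine Filter.Tendsto.congr' ?_ tendsto_const_nhds
      filter_upwards [self_mem_nhdsWithin] with s hs
      rw [hv x s hs, hpde x s hs, hL x s hs]
      ring
    have heval : v x 0 - L x 0 - c x * u x 0 = 0 := tendsto_nhds_unique hf0 hzero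
    rw [hinit x] at heval
    linarith
  have hi : ∀ x ∈ Ω, v x 0 = spatialLaplacian p x + c x * p x := fun x _ => by
    rw [hstep x, hkey x]
  have hii : ∀ x ∈ Ω, c x = (v x 0 - spatialLaplacian p x) / p x := by
    intro x hx
    have hpx : p x ≠ 0 := hpne x (subset_closure hx)
    rw [hi x hx, eq_div_iff hpx]
    ring
  exact ⟨hi, hii, fun x hx t ht => by
    rw [← hii x hx]
    exact part3 hu_smooth hv hpde x t ht⟩
end
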